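/- arXiv:2004.06221 — 8 statements merged into one kernel-verified Lean document; each statement's English description precedes it below -/
import Mathlib

section
/- Let N ≥ 3 be an integer, N/(N−1) < p < 2, α := (p−1)(N−1), β := (p−1)/(α−1), so α > 1. For t > −β define u_t(r) := ∫_r^1 (β y + t y^α)^{−1/(p−1)} dy for 0 < r ≤ 1. Then the radial function u(x) := u_t(|x|) is a positive classical solution of −Δu = |∇u|^p in B_1 \ {0} with u = 0 on ∂B_1, and u_t(r) → ∞ as r → 0⁺. -/
open Metric Filter Set
open scoped Topology RealInnerProductSpace

/-- The Laplacian of `f : ℝ^N → ℝ`, as the sum of pure second partial derivatives. -/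
noncomputable def lap {N : ℕ} (f : EuclideanSpace ℝ (Fin N) → ℝ)
    (x : EuclideanSpace ℝ (Fin N)) : ℝ :=
  ∑ i : Fin N, fderiv ℝ (fun y => fderiv ℝ f y (EuclideanSpace.single i 1)) x
    (EuclideanSpace.single i 1)

noncomputable def gfun (p α β t y : ℝ) : ℝ := (β * y + t * y ^ α) ^ (-(1 / (p - 1)))

noncomputable def gder (p α β t y : ℝ) : ℝ :=
  -(1 / (p - 1)) * (β * y + t * y ^ α) ^ (-(1 / (p - 1)) - 1) * (β + t * (α * y ^ (α - 1)))

section aux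

variable {p α β t : ℝ}

lemma hfun_pos (hβ0 : 0 < β) (hα1 : 1 < α) (ht : -β < t) {y : ℝ}
    (hy0 : 0 < y) (hy1 : y ≤ 1) : 0 < β * y + t * y ^ α := by
  have hyα0 : 0 < y ^ α := Real.rpow_pos_of_pos hy0 α
  have hyα : y ^ α ≤ y := by
    have := Real.rpow_le_rpow_of_exponent_ge hy0 hy1 hα1.le
    rwa [Real.rpow_one] at this
  nlinarith [mul_lt_mul_of_pos_right ht hyα0, mul_le_mul_of_nonneg_left hyα hβ0.le]

lemma hfun_hasDerivAt {y : ℝ} (hy : 0 < y) :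
    HasDerivAt (fun z : ℝ => β * z + t * z ^ α) (β + t * (α * y ^ (α - 1))) y := by
  have h1 : HasDerivAt (fun z : ℝ => β * z) β y := by
    simpa using (hasDerivAt_id y).const_mul β
  have h2 : HasDerivAt (fun z : ℝ => t * z ^ α) (t * (α * y ^ (α - 1))) y :=
    (Real.hasDerivAt_rpow_const (Or.inl hy.ne')).const_mul t
  exact h1.add h2

lemma gfun_hasDerivAt {y : ℝ} (hy : 0 < y) (hH : 0 < β * y + t * y ^ α) :
    HasDerivAt (gfun p α β t) (gder p α β t y) y := by
  have h := (hfun_hasDerivAt (t := t) (α := α) (β := β) hy).rpow_const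
    (p := -(1 / (p - 1))) (Or.inl hH.ne')
  rw [show gder p α β t y = (β + t * (α * y ^ (α - 1))) * -(1 / (p - 1)) *
    (β * y + t * y ^ α) ^ (-(1 / (p - 1)) - 1) from by rw [gder]; ring]
  exact h

lemma gfun_contDiffAt {n : WithTop ℕ∞} {y : ℝ} (hy : 0 < y) (hH : 0 < β * y + t * y ^ α) :
    ContDiffAt ℝ n (gfun p α β t) y := by
  have h1 : ContDiffAt ℝ n (fun z : ℝ => β * z + t * z ^ α) y :=
    (contDiffAt_const.mul contDiffAt_id).add
      (contDiffAt_const.mul (Real.contDiffAt_rpow_const_of_ne hy.ne'))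
  exact h1.rpow_const_of_ne hH.ne'

lemma gfun_contOn (hβ0 : 0 < β) (hα1 : 1 < α) (ht : -β < t) {r : ℝ}
    (hr0 : 0 < r) (hr1 : r ≤ 1) : ContinuousOn (gfun p α β t) (uIcc r 1) := by
  rw [uIcc_of_le hr1]
  intro y hy
  have hy0 : 0 < y := lt_of_lt_of_le hr0 hy.1
  exact ((gfun_contDiffAt (n := 0) hy0 (hfun_pos hβ0 hα1 ht hy0 hy.2)).continuousAt).continuousWithinAt

lemma key_ode {N : ℕ} (hN : 3 ≤ N) (hp : 1 < p) (hα : α = (p - 1) * ((N : ℝ) - 1))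
    (hα1 : 1 < α) (hβ : β = (p - 1) / (α - 1)) {r : ℝ} (hr0 : 0 < r)
    (hH : 0 < β * r + t * r ^ α) :
    gder p α β t r + ((N : ℝ) - 1) * gfun p α β t r / r = gfun p α β t r ^ p := by
  have hpm : (0 : ℝ) < p - 1 := by linarith
  have hαm : α - 1 ≠ 0 := sub_ne_zero.mpr (ne_of_gt hα1)
  have hep : -(1 / (p - 1)) * p = -(1 / (p - 1)) - 1 := by field_simp; ring
  have hrw1 : gfun p α β t r ^ p = (β * r + t * r ^ α) ^ (-(1 / (p - 1)) - 1) := by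
    rw [gfun, ← Real.rpow_mul hH.le, hep]
  have hge : gfun p α β t r
      = (β * r + t * r ^ α) ^ (-(1 / (p - 1)) - 1) * (β * r + t * r ^ α) := by
    rw [gfun, ← Real.rpow_add_one hH.ne']
    norm_num
  have hrα : r ^ α = r ^ (α - 1) * r := by
    rw [← Real.rpow_add_one hr0.ne']
    norm_num
  rw [hrw1, hge, gder, hrα]
  set q : ℝ := r ^ (α - 1) with hq
  set A : ℝ := (β * r + t * (q * r)) ^ (-(1 / (p - 1)) - 1) with hA
  -- now a pure field identity
  have hc : -(1 / (p - 1)) * (β + t * (α * q)) + ((N : ℝ) - 1) * (β + t * q) = 1 := by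
    subst hβ
    subst hα
    have h1 : (p - 1) * ((N : ℝ) - 1) - 1 ≠ 0 := sub_ne_zero.mpr (ne_of_gt hα1)
    field_simp
    ring
  have h2 : ((N : ℝ) - 1) * (A * (β * r + t * (q * r))) / r = ((N : ℝ) - 1) * (A * (β + t * q)) := by
    field_simp
  rw [h2]
  calc -(1 / (p - 1)) * A * (β + t * (α * q)) + ((N : ℝ) - 1) * (A * (β + t * q))
      = A * (-(1 / (p - 1)) * (β + t * (α * q)) + ((N : ℝ) - 1) * (β + t * q)) := by ring
    _ = A := by rw [hc, mul_one]

lemma lap_value {N : ℕ} (hN : 3 ≤ N) (hp : 1 < p) (hα : α = (p - 1) * ((N : ℝ) - 1))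
    (hα1 : 1 < α) (hβ : β = (p - 1) / (α - 1)) {r : ℝ} (hr0 : 0 < r)
    (hH : 0 < β * r + t * r ^ α) :
    -(2 * (N : ℝ) * (-(gfun p α β t r) * (1 / (2 * r))) + 4 * (r ^ 2) *
      (-(gder p α β t r * (1 / (2 * r))) * (1 / (2 * r)) +
        -(gfun p α β t r) * (-(2 * (1 / (2 * r))) / (2 * r) ^ 2)))
    = gfun p α β t r ^ p := by
  rw [← key_ode hN hp hα hα1 hβ hr0 hH]
  have hr : r ≠ 0 := hr0.ne'
  field_simp
  ring

lemma blowup (hp : 1 < p) (hp2 : p < 2) (hβ0 : 0 < β) (hα1 : 1 < α) (ht : -β < t)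
    (ut : ℝ → ℝ) (hut : ∀ r : ℝ, ut r = ∫ y in r..(1 : ℝ), gfun p α β t y) :
    Tendsto ut (𝓝[>] (0 : ℝ)) atTop := by
  have hpm : (0 : ℝ) < p - 1 := by linarith
  obtain ⟨e, he⟩ : ∃ e : ℝ, e = -(1 / (p - 1)) := ⟨_, rfl⟩
  have he1 : e + 1 < 0 := by
    have : 1 < 1 / (p - 1) := by rw [lt_div_iff₀ hpm]; linarith
    rw [he]; linarith
  set c : ℝ := β + |t| with hc
  have hc0 : 0 < c := lt_of_lt_of_le hβ0 (le_add_of_nonneg_right (abs_nonneg t))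
  have hInt : ∀ r : ℝ, 0 < r → r ≤ 1 →
      IntervalIntegrable (gfun p α β t) MeasureTheory.volume r 1 := fun r h0 h1 =>
    (gfun_contOn hβ0 hα1 ht h0 h1).intervalIntegrable
  have hIntP : ∀ r : ℝ, 0 < r → r ≤ 1 →
      IntervalIntegrable (fun y => c ^ e * y ^ e) MeasureTheory.volume r 1 := by
    intro r h0 h1
    apply ContinuousOn.intervalIntegrable
    rw [uIcc_of_le h1]
    intro y hy
    have hy0 : 0 < y := lt_of_lt_of_le h0 hy.1
    exact (continuousAt_const.mul
      (Real.continuousAt_rpow_const y e (Or.inl hy0.ne'))).continuousWithinAt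
  have hLB : ∀ r ∈ Ioo (0 : ℝ) 1, c ^ e * ((1 - r ^ (e + 1)) / (e + 1)) ≤ ut r := by
    intro r hr
    have hcalc : (∫ y in r..(1 : ℝ), c ^ e * y ^ e)
        = c ^ e * ((1 - r ^ (e + 1)) / (e + 1)) := by
      rw [intervalIntegral.integral_const_mul,
        integral_rpow (Or.inr ⟨ne_of_lt (by linarith), notMem_uIcc_of_lt hr.1 one_pos⟩),
        Real.one_rpow]
    rw [hut r, ← hcalc]
    apply intervalIntegral.integral_mono_on hr.2.le (hIntP r hr.1 hr.2.le)
      (hInt r hr.1 hr.2.le)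
    intro y hy
    have hy0 : 0 < y := lt_of_lt_of_le hr.1 hy.1
    have hH := hfun_pos hβ0 hα1 ht hy0 hy.2
    have hyα : y ^ α ≤ y := by
      have := Real.rpow_le_rpow_of_exponent_ge hy0 hy.2 hα1.le
      rwa [Real.rpow_one] at this
    have hle : β * y + t * y ^ α ≤ c * y := by
      have h1 : t * y ^ α ≤ |t| * y ^ α :=
        mul_le_mul_of_nonneg_right (le_abs_self t) (Real.rpow_pos_of_pos hy0 α).le
      have h2 : |t| * y ^ α ≤ |t| * y := mul_le_mul_of_nonneg_left hyα (abs_nonneg t)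
      simp only [hc]; nlinarith
    calc c ^ e * y ^ e = (c * y) ^ e := (Real.mul_rpow hc0.le hy0.le).symm
      _ ≤ (β * y + t * y ^ α) ^ e :=
        (Real.rpow_le_rpow_iff_of_neg (by positivity) hH (by linarith)).mpr hle
      _ = gfun p α β t y := by rw [gfun, he]
  have hX : Tendsto (fun r : ℝ => r ^ (e + 1)) (𝓝[>] (0 : ℝ)) atTop := by
    have h1 : Tendsto (fun x : ℝ => x ^ (-(e + 1))) atTop atTop :=
      tendsto_rpow_atTop (by linarith)
    have h2 := h1.comp tendsto_inv_nhdsGT_zero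
    apply h2.congr'
    filter_upwards [self_mem_nhdsWithin] with r (hr : 0 < r)
    simp only [Function.comp_apply]
    rw [Real.inv_rpow hr.le, ← Real.rpow_neg hr.le, neg_neg]
  have hL : Tendsto (fun r : ℝ => c ^ e * ((1 - r ^ (e + 1)) / (e + 1)))
      (𝓝[>] (0 : ℝ)) atTop := by
    have hcoef : 0 < c ^ e / (-(e + 1)) :=
      div_pos (Real.rpow_pos_of_pos hc0 e) (by linarith)
    have h3 : Tendsto (fun r : ℝ => c ^ e / (-(e + 1)) * r ^ (e + 1) +
        -(c ^ e / (-(e + 1)))) (𝓝[>] (0 : ℝ)) atTop :=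
      tendsto_atTop_add_const_right _ _ (hX.const_mul_atTop hcoef)
    apply h3.congr
    intro r
    have hne : e + 1 ≠ 0 := ne_of_lt he1
    have hne2 : -1 - e ≠ 0 := by intro h; apply hne; linarith
    generalize r ^ (e + 1) = X
    have hT : (e + 1) * (-1 - e)⁻¹ = -1 := by
      rw [mul_comm, inv_mul_eq_div, div_eq_iff hne2]; ring
    field_simp
    ring
  apply tendsto_atTop_mono' _ _ hL
  filter_upwards [Ioo_mem_nhdsGT_of_mem (⟨le_refl (0 : ℝ), one_pos⟩ : (0:ℝ) ∈ Ico (0:ℝ) 1)]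
    with r hr
  exact hLB r hr

end aux

/-- the explicit radial function
`u_t(r) = ∫_r^1 (βy + ty^α)^{-1/(p-1)} dy` gives a positive singular classical solution of
`-Δu = |∇u|^p` on `B₁ \ {0}` vanishing on `∂B₁` and blowing up at the origin. -/
theorem stmt_3 (N : ℕ) (hN : 3 ≤ N) (p : ℝ)
    (hp1 : (N : ℝ) / ((N : ℝ) - 1) < p) (hp2 : p < 2)
    (α β t : ℝ) (hα : α = (p - 1) * ((N : ℝ) - 1)) (hβ : β = (p - 1) / (α - 1))
    (ht : -β < t)
    (ut : ℝ → ℝ)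
    (hut : ∀ r : ℝ, ut r = ∫ y in r..(1 : ℝ), (β * y + t * y ^ α) ^ (-(1 / (p - 1))))
    (u : EuclideanSpace ℝ (Fin N) → ℝ) (hu : ∀ x, u x = ut ‖x‖) :
    (∀ x ∈ ball (0 : EuclideanSpace ℝ (Fin N)) 1 \ {0}, 0 < u x) ∧
    ContDiffOn ℝ 2 u (ball (0 : EuclideanSpace ℝ (Fin N)) 1 \ {0}) ∧
    (∀ x ∈ ball (0 : EuclideanSpace ℝ (Fin N)) 1 \ {0},
      -lap u x = ‖gradient u x‖ ^ p) ∧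
    (∀ x : EuclideanSpace ℝ (Fin N), ‖x‖ = 1 → u x = 0) ∧
    Tendsto ut (𝓝[>] (0 : ℝ)) atTop := by
  classical
  have hN3 : (3 : ℝ) ≤ (N : ℝ) := by exact_mod_cast hN
  have hNpos : (0 : ℝ) < (N : ℝ) - 1 := by linarith
  have hp1' : 1 < p := by
    have h1 : (1 : ℝ) < (N : ℝ) / ((N : ℝ) - 1) := by
      rw [lt_div_iff₀ hNpos]; linarith
    linarith
  have hpm : (0 : ℝ) < p - 1 := by linarith
  have hα1 : 1 < α := by
    have h2 : (N : ℝ) < p * ((N : ℝ) - 1) := (div_lt_iff₀ hNpos).mp hp1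
    rw [hα]; nlinarith
  have hβ0 : 0 < β := by rw [hβ]; exact div_pos hpm (by linarith)
  set g : ℝ → ℝ := gfun p α β t with hgdef
  have hut' : ut = fun r => ∫ y in r..(1 : ℝ), g y := funext hut
  -- derivative of ut
  have hgOn : ContinuousOn g (Ioo (0 : ℝ) 1) := fun y hy =>
    ((gfun_contDiffAt (n := 0) hy.1 (hfun_pos hβ0 hα1 ht hy.1 hy.2.le)).continuousAt).continuousWithinAt
  have hutDeriv : ∀ r ∈ Ioo (0 : ℝ) 1, HasDerivAt ut (-(g r)) r := by
    intro r hr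
    have hint : IntervalIntegrable g MeasureTheory.volume r 1 :=
      (gfun_contOn hβ0 hα1 ht hr.1 hr.2.le).intervalIntegrable
    have hmeas : StronglyMeasurableAtFilter g (𝓝 r) MeasureTheory.volume :=
      hgOn.stronglyMeasurableAtFilter isOpen_Ioo r hr
    have hcont : ContinuousAt g r :=
      (gfun_contDiffAt (n := 0) hr.1 (hfun_pos hβ0 hα1 ht hr.1 hr.2.le)).continuousAt
    have := intervalIntegral.integral_hasDerivAt_left hint hmeas hcont
    rw [hut']
    exact this
  have hutCD : ContDiffOn ℝ 2 ut (Ioo (0 : ℝ) 1) := by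
    rw [show (2 : WithTop ℕ∞) = 1 + 1 from by norm_num,
      contDiffOn_succ_iff_deriv_of_isOpen isOpen_Ioo]
    refine ⟨fun r hr => ((hutDeriv r hr).differentiableAt).differentiableWithinAt, ?_, ?_⟩
    · simp
    · apply ContDiffOn.congr (f := fun r => -(g r))
      · intro y hy
        exact ((gfun_contDiffAt (n := 1) hy.1
          (hfun_pos hβ0 hα1 ht hy.1 hy.2.le)).neg).contDiffWithinAt
      · intro r hr
        exact (hutDeriv r hr).deriv
  refine ⟨?_, ?_, ?_, ?_, ?_⟩
  -- positivity
  · rintro x ⟨hx1, hx0'⟩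
    have hx0 : x ≠ 0 := by simpa using hx0'
    have hr0 : 0 < ‖x‖ := norm_pos_iff.mpr hx0
    have hr1 : ‖x‖ < 1 := mem_ball_zero_iff.mp hx1
    rw [hu x, hut ‖x‖]
    apply intervalIntegral.intervalIntegral_pos_of_pos_on
    · exact (gfun_contOn hβ0 hα1 ht hr0 hr1.le).intervalIntegrable
    · intro y hy
      have hy0 : 0 < y := lt_trans hr0 hy.1
      exact Real.rpow_pos_of_pos (hfun_pos hβ0 hα1 ht hy0 hy.2.le) _
    · exact hr1
  -- smoothness
  · intro x hx
    obtain ⟨hx1, hx0'⟩ := hx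
    have hx0 : x ≠ 0 := by simpa using hx0'
    have hr0 : 0 < ‖x‖ := norm_pos_iff.mpr hx0
    have hr1 : ‖x‖ < 1 := mem_ball_zero_iff.mp hx1
    have h1 : ContDiffAt ℝ 2 ut ‖x‖ := hutCD.contDiffAt (Ioo_mem_nhds hr0 hr1)
    have h2 : ContDiffAt ℝ 2 (fun y : EuclideanSpace ℝ (Fin N) => ‖y‖) x :=
      contDiffAt_norm ℝ hx0
    have hueq : u = fun y => ut ‖y‖ := funext hu
    rw [hueq]
    exact (h1.comp x h2).contDiffWithinAt
  -- the PDE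
  · rintro x ⟨hx1, hx0'⟩
    have hx0 : x ≠ 0 := by simpa using hx0'
    have hr0 : 0 < ‖x‖ := norm_pos_iff.mpr hx0
    have hr1 : ‖x‖ < 1 := mem_ball_zero_iff.mp hx1
    have hHx : 0 < β * ‖x‖ + t * ‖x‖ ^ α := hfun_pos hβ0 hα1 ht hr0 hr1.le
    set V : Set (EuclideanSpace ℝ (Fin N)) := ball 0 1 \ {0} with hVdef
    have hVopen : IsOpen V := isOpen_ball.sdiff isClosed_singleton
    have hxV : x ∈ V := ⟨hx1, hx0'⟩
    set F : EuclideanSpace ℝ (Fin N) → ℝ := fun y => ⟪y, y⟫ with hFdef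
    have hFval : ∀ y : EuclideanSpace ℝ (Fin N), F y = ‖y‖ ^ 2 := fun y =>
      real_inner_self_eq_norm_sq y
    have hFsqrt : ∀ y : EuclideanSpace ℝ (Fin N), Real.sqrt (F y) = ‖y‖ := fun y => by
      rw [hFval y, Real.sqrt_sq (norm_nonneg y)]
    have hFderiv : ∀ y : EuclideanSpace ℝ (Fin N),
        HasFDerivAt F ((fderivInnerCLM ℝ (y, y)).comp
          ((ContinuousLinearMap.id ℝ (EuclideanSpace ℝ (Fin N))).prod
            (ContinuousLinearMap.id ℝ (EuclideanSpace ℝ (Fin N))))) y := fun y =>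
      (hasFDerivAt_id y).inner ℝ (hasFDerivAt_id y)
    set phi1 : ℝ → ℝ := fun σ =>
      -g (Real.sqrt σ) * (1 / (2 * Real.sqrt σ)) with hphi1def
    have hphi1 : ∀ σ : ℝ, 0 < σ → Real.sqrt σ < 1 →
        HasDerivAt (fun σ => ut (Real.sqrt σ)) (phi1 σ) σ := by
      intro σ hσ hσ1
      have h1 := Real.hasDerivAt_sqrt hσ.ne'
      have h2 := hutDeriv (Real.sqrt σ) ⟨Real.sqrt_pos.mpr hσ, hσ1⟩
      exact h2.comp σ h1
    set D : ℝ → ℝ := fun σ =>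
      -(gder p α β t (Real.sqrt σ) * (1 / (2 * Real.sqrt σ))) * (1 / (2 * Real.sqrt σ)) +
        -g (Real.sqrt σ) * (-(2 * (1 / (2 * Real.sqrt σ))) / (2 * Real.sqrt σ) ^ 2) with hDdef
    have hphi1' : ∀ σ : ℝ, 0 < σ → Real.sqrt σ < 1 → HasDerivAt phi1 (D σ) σ := by
      intro σ hσ hσ1
      have hs0 : 0 < Real.sqrt σ := Real.sqrt_pos.mpr hσ
      have hs1 := Real.hasDerivAt_sqrt hσ.ne'
      have hHσ : 0 < β * Real.sqrt σ + t * Real.sqrt σ ^ α :=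
        hfun_pos hβ0 hα1 ht hs0 hσ1.le
      have hg1 : HasDerivAt g (gder p α β t (Real.sqrt σ)) (Real.sqrt σ) :=
        gfun_hasDerivAt hs0 hHσ
      have hc1 : HasDerivAt (fun σ : ℝ => -g (Real.sqrt σ))
          (-(gder p α β t (Real.sqrt σ) * (1 / (2 * Real.sqrt σ)))) σ :=
        (hg1.comp σ hs1).neg
      have h3 : HasDerivAt (fun σ : ℝ => 2 * Real.sqrt σ) (2 * (1 / (2 * Real.sqrt σ))) σ :=
        hs1.const_mul 2
      have h3ne : 2 * Real.sqrt σ ≠ 0 := by positivity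
      have hc2 : HasDerivAt (fun σ : ℝ => 1 / (2 * Real.sqrt σ))
          (-(2 * (1 / (2 * Real.sqrt σ))) / (2 * Real.sqrt σ) ^ 2) σ := by
        exact (h3.inv h3ne).congr_of_eventuallyEq (Eventually.of_forall fun σ => by simp only [Pi.inv_apply, one_div])
      exact hc1.mul hc2
    have hueq2 : u = fun y => ut (Real.sqrt (F y)) := by
      funext y; rw [hu y, hFsqrt y]
    have hVfacts : ∀ y ∈ V, 0 < F y ∧ Real.sqrt (F y) < 1 := by
      intro y hy
      have hy0 : y ≠ 0 := by simpa using hy.2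
      have hy0' : 0 < ‖y‖ := norm_pos_iff.mpr hy0
      have hy1 : ‖y‖ < 1 := mem_ball_zero_iff.mp hy.1
      refine ⟨?_, ?_⟩
      · rw [hFval y]; positivity
      · rw [hFsqrt y]; exact hy1
    have huF : ∀ y ∈ V, HasFDerivAt u (phi1 (F y) •
        ((fderivInnerCLM ℝ (y, y)).comp
          ((ContinuousLinearMap.id ℝ (EuclideanSpace ℝ (Fin N))).prod
            (ContinuousLinearMap.id ℝ (EuclideanSpace ℝ (Fin N)))))) y := by
      intro y hy
      obtain ⟨hy1, hy2⟩ := hVfacts y hy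
      have := (hphi1 (F y) hy1 hy2).comp_hasFDerivAt y (hFderiv y)
      rw [hueq2]
      exact this
    set s : ℝ := F x with hsdef
    have hs0 : 0 < s := (hVfacts x hxV).1
    have hsr : Real.sqrt s = ‖x‖ := hFsqrt x
    have hs1 : Real.sqrt s < 1 := (hVfacts x hxV).2
    -- compute lap
    have hlap : lap u x = 2 * (N : ℝ) * phi1 s + 4 * s * D s := by
      rw [lap]
      have hterm : ∀ i : Fin N,
          fderiv ℝ (fun y => fderiv ℝ u y (EuclideanSpace.single i 1)) x
            (EuclideanSpace.single i 1)
          = phi1 s * 2 + (2 * x i) * (D s * (2 * x i)) := by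
        intro i
        set ei : EuclideanSpace ℝ (Fin N) := EuclideanSpace.single i 1 with heidef
        set G : EuclideanSpace ℝ (Fin N) → ℝ := fun y =>
          phi1 (F y) * (⟪y, ei⟫ + ⟪ei, y⟫) with hGdef
        have hev : (fun y => fderiv ℝ u y ei) =ᶠ[𝓝 x] G := by
          filter_upwards [hVopen.mem_nhds hxV] with y hy
          rw [(huF y hy).fderiv]
          simp [hGdef]
        have h2a := (hasFDerivAt_id x).inner ℝ (hasFDerivAt_const ei x)
        have h2b := (hasFDerivAt_const ei x).inner ℝ (hasFDerivAt_id x)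
        have hlin := h2a.add h2b
        have h1 : HasFDerivAt (fun y => phi1 (F y))
            (D s • ((fderivInnerCLM ℝ (x, x)).comp
              ((ContinuousLinearMap.id ℝ (EuclideanSpace ℝ (Fin N))).prod
                (ContinuousLinearMap.id ℝ (EuclideanSpace ℝ (Fin N)))))) x :=
          (hphi1' (F x) hs0 hs1).comp_hasFDerivAt x (hFderiv x)
        have hG := h1.mul hlin
        simp only [id_eq] at hG
        rw [hev.fderiv_eq, hGdef, show (fun y => phi1 (F y) * (⟪y, ei⟫ + ⟪ei, y⟫)) = ((fun y => phi1 (F y)) * ((fun t => ⟪t, ei⟫) + fun t => ⟪ei, t⟫)) from rfl, hG.fderiv]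
        have hei : (ei : EuclideanSpace ℝ (Fin N)) i = 1 := by
          simp [heidef, EuclideanSpace.single_apply]
        have hinner1 : ⟪x, ei⟫ = x i := by
          simp [heidef, EuclideanSpace.inner_single_right]
        have hinner2 : ⟪ei, x⟫ = x i := by
          simp [heidef, EuclideanSpace.inner_single_left]
        have hinner3 : ⟪ei, ei⟫ = (1 : ℝ) := by
          simp [heidef, EuclideanSpace.inner_single_left, EuclideanSpace.single_apply]
        simp only [ContinuousLinearMap.add_apply, ContinuousLinearMap.smul_apply,
          ContinuousLinearMap.comp_apply, ContinuousLinearMap.prod_apply,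
          ContinuousLinearMap.coe_id', id_eq, fderivInnerCLM_apply, smul_eq_mul,
          ContinuousLinearMap.zero_apply, ContinuousLinearMap.coe_zero, Pi.zero_apply, Pi.add_apply]
        rw [hinner1, hinner2, hinner3]
        simp only [inner_zero_left, inner_zero_right]
        rw [← hsdef]
        ring
      rw [Finset.sum_congr rfl (fun i _ => hterm i)]
      rw [Finset.sum_add_distrib, Finset.sum_const, Finset.card_univ, Fintype.card_fin]
      have hxx : ∑ i : Fin N, (2 * x i) * (D s * (2 * x i)) = 4 * s * D s := by
        have h4 : ∀ i : Fin N, (2 * x i) * (D s * (2 * x i)) = 4 * D s * (x i * x i) :=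
          fun i => by ring
        rw [Finset.sum_congr rfl (fun i _ => h4 i), ← Finset.mul_sum]
        have : ∑ i : Fin N, x i * x i = s := by
          rw [hsdef, hFdef]
          simp [PiLp.inner_apply, RCLike.inner_apply, mul_comm]
          rw [EuclideanSpace.norm_eq, Real.sq_sqrt (by positivity)]
          simp [Real.norm_eq_abs, sq]
        rw [this]; ring
      rw [hxx, nsmul_eq_mul]
      ring
    -- compute gradient
    have hgrad : HasGradientAt u ((2 * phi1 s) • x) x := by
      rw [hasGradientAt_iff_hasFDerivAt]
      refine (huF x hxV).congr_fderiv ?_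
      apply ContinuousLinearMap.ext
      intro v
      simp only [InnerProductSpace.toDual_apply_apply, ContinuousLinearMap.smul_apply,
        ContinuousLinearMap.comp_apply, ContinuousLinearMap.prod_apply,
        ContinuousLinearMap.coe_id', id_eq, fderivInnerCLM_apply, smul_eq_mul,
        real_inner_smul_left]
      rw [real_inner_comm v x]
      ring
    have hgr : gradient u x = (2 * phi1 s) • x := hgrad.gradient
    have hgnorm : ‖gradient u x‖ = g ‖x‖ := by
      rw [hgr, norm_smul, Real.norm_eq_abs]
      have hphi1v : phi1 s = -g ‖x‖ * (1 / (2 * ‖x‖)) := by rw [hphi1def]; simp [hsr]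
      have hgpos : 0 < g ‖x‖ := Real.rpow_pos_of_pos hHx _
      have hnonpos : 2 * (-g ‖x‖ * (1 / (2 * ‖x‖))) ≤ 0 := by
        have h1 : 0 < 1 / (2 * ‖x‖) := by positivity
        nlinarith
      rw [hphi1v, abs_of_nonpos hnonpos]
      field_simp
    -- conclude
    rw [hgnorm, hlap]
    have := lap_value (t := t) hN hp1' hα hα1 hβ hr0 hHx
    rw [← this]
    have hphi1v : phi1 s = -g ‖x‖ * (1 / (2 * ‖x‖)) := by rw [hphi1def]; simp [hsr]
    have hDv : D s = -(gder p α β t ‖x‖ * (1 / (2 * ‖x‖))) * (1 / (2 * ‖x‖)) +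
        -g ‖x‖ * (-(2 * (1 / (2 * ‖x‖))) / (2 * ‖x‖) ^ 2) := by
      rw [hDdef]; simp [hsr]
    have hsval : s = ‖x‖ ^ 2 := hFval x
    rw [hphi1v, hDv, hsval, hgdef]
  -- boundary value
  · intro x hx
    rw [hu x, hx, hut]
    exact intervalIntegral.integral_same
  -- blow-up
  · exact blowup hp1' hp2 hβ0 hα1 ht ut hut
end

section
/- Let N ≥ 3 be an integer, N/(N−1) < p < 2, α := (p−1)(N−1), β := (p−1)/(α−1), σ := (2−p)/(p−1), and let t > 0. Define ψ_t(r) := (1/(p−1)) ∫_r^1 y^α (β y + t y^α)^{−p/(p−1)} dy for 0 < r ≤ 1. Then the radial function ψ(x) := ψ_t(|x|) satisfies L_t(ψ) = 0 in B_1 \ {0}, ψ = 0 on ∂B_1, and sup_{0<r≤1} ( r^σ |ψ_t(r)| + r^{σ+1} |ψ_t'(r)| ) < ∞. -/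
open Metric Filter Set
open scoped Topology

lemma aux_g_deriv (α β t : ℝ) {r : ℝ} (hr : 0 < r) :
    HasDerivAt (fun y : ℝ => β * y + t * y ^ α) (β + t * (α * r ^ (α - 1))) r := by
  have h1 : HasDerivAt (fun y : ℝ => β * y) (β * 1) r := (hasDerivAt_id r).const_mul β
  have h2 : HasDerivAt (fun y : ℝ => t * y ^ α) (t * (α * r ^ (α - 1))) r :=
    (Real.hasDerivAt_rpow_const (Or.inl hr.ne')).const_mul t
  have h3 := h1.add h2
  rw [mul_one] at h3
  exact h3

lemma aux_h_deriv (p Nr α β t : ℝ) (hp : 1 < p) (hβ0 : 0 < β) (ht : 0 < t)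
    (hα : α = (p - 1) * (Nr - 1)) (hβ : β * (α - 1) = p - 1) {r : ℝ} (hr : 0 < r) :
    HasDerivAt (fun y : ℝ => y ^ α * (β * y + t * y ^ α) ^ (-(p / (p - 1))))
      (p * (r ^ α * (β * r + t * r ^ α) ^ (-(p / (p - 1)))) / (β * r + t * r ^ α)
        - (Nr - 1) * (r ^ α * (β * r + t * r ^ α) ^ (-(p / (p - 1)))) / r) r := by
  have hp1 : p - 1 ≠ 0 := by linarith
  set q : ℝ := p / (p - 1) with hqdef
  have hq : q * (p - 1) = p := by rw [hqdef, div_mul_cancel₀ _ hp1]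
  have hgr : 0 < β * r + t * r ^ α := by positivity
  have hgq : HasDerivAt (fun y : ℝ => (β * y + t * y ^ α) ^ (-q))
      ((β + t * (α * r ^ (α - 1))) * (-q) * (β * r + t * r ^ α) ^ (-q - 1)) r :=
    (aux_g_deriv α β t hr).rpow_const (Or.inl hgr.ne')
  have hA : HasDerivAt (fun y : ℝ => y ^ α) (α * r ^ (α - 1)) r :=
    Real.hasDerivAt_rpow_const (Or.inl hr.ne')
  have hD := hA.mul hgq
  refine hD.congr_deriv ?_
  symm
  have e1 : r ^ α = r ^ (α - 1) * r := by
    rw [← Real.rpow_add_one hr.ne']; ring_nf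
  have e2 : (β * r + t * r ^ α) ^ (-q) = (β * r + t * r ^ α) ^ (-q - 1) * (β * r + t * r ^ α) := by
    rw [← Real.rpow_add_one hgr.ne']; ring_nf
  have key1 : (α + (Nr - 1)) * (p - 1) = p * α := by rw [hα]; ring
  have key1' : α + (Nr - 1) = q * α := by
    apply mul_right_cancel₀ hp1
    rw [key1]; nlinarith [hq]
  have key2' : (α + (Nr - 1)) * β = p + q * β := by
    apply mul_right_cancel₀ hp1
    nlinarith [key1, hq, hβ]
  set A' := r ^ (α - 1)
  set B' := (β * r + t * r ^ α) ^ (-q - 1) with hB'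
  rw [e2, e1]
  have hg' : β * r + t * (A' * r) ≠ 0 := by rw [← e1]; exact hgr.ne'
  have hinv1 : (β * r + t * (A' * r)) * (β * r + t * (A' * r))⁻¹ = 1 := mul_inv_cancel₀ hg'
  have hinv2 : r * r⁻¹ = 1 := mul_inv_cancel₀ hr.ne'
  linear_combination (p * A' * r * B') * hinv1 - ((Nr - 1) * A' * B' * (β * r + t * (A' * r))) * hinv2
    - (A' * B' * r) * key2' - (A' * B' * t * A' * r) * key1'

set_option maxHeartbeats 2000000 in
/-- `ψ_t(r) = (1/(p-1)) ∫_r^1 y^α (βy + ty^α)^{-p/(p-1)} dy` gives a radial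
element of the kernel of the linearized operator `L_t` on `B₁ \ {0}`, vanishing on `∂B₁`,
with the weighted norm `sup (r^σ|ψ_t| + r^{σ+1}|ψ_t'|)` finite. -/
theorem stmt_4 (N : ℕ) (hN : 3 ≤ N) (p : ℝ)
    (hp1 : (N : ℝ) / ((N : ℝ) - 1) < p) (hp2 : p < 2)
    (α β σ t : ℝ) (hα : α = (p - 1) * ((N : ℝ) - 1)) (hβ : β = (p - 1) / (α - 1))
    (hσ : σ = (2 - p) / (p - 1)) (ht : 0 < t)
    (ψt : ℝ → ℝ)
    (hψt : ∀ r : ℝ, ψt r =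
      (1 / (p - 1)) * ∫ y in r..(1 : ℝ), y ^ α * (β * y + t * y ^ α) ^ (-(p / (p - 1))))
    (ψ : EuclideanSpace ℝ (Fin N) → ℝ) (hψ : ∀ x, ψ x = ψt ‖x‖) :
    (∀ x ∈ ball (0 : EuclideanSpace ℝ (Fin N)) 1 \ {0},
      -lap ψ x + p * (inner ℝ x (gradient ψ x) : ℝ) / (β * ‖x‖ ^ 2 + t * ‖x‖ ^ (α + 1)) = 0) ∧
    (∀ x : EuclideanSpace ℝ (Fin N), ‖x‖ = 1 → ψ x = 0) ∧
    (∃ C : ℝ, ∀ r ∈ Ioc (0 : ℝ) 1, r ^ σ * |ψt r| + r ^ (σ + 1) * |deriv ψt r| ≤ C) := by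
  have hNr : (3:ℝ) ≤ (N:ℝ) := by exact_mod_cast hN
  have hN1 : (0:ℝ) < (N:ℝ) - 1 := by linarith
  have hpN : (N : ℝ) < p * ((N:ℝ) - 1) := (div_lt_iff₀ hN1).mp hp1
  have hp : 1 < p := by nlinarith
  have hp1' : (0:ℝ) < p - 1 := by linarith
  have hα1 : 1 < α := by rw [hα]; nlinarith
  have hβ0 : 0 < β := by rw [hβ]; exact div_pos (by linarith) (by linarith)
  have hβeq : β * (α - 1) = p - 1 := by rw [hβ, div_mul_cancel₀ _ (by linarith : α - 1 ≠ 0)]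
  have hσ0 : 0 < σ := by rw [hσ]; exact div_pos (by linarith) hp1'
  set q : ℝ := p / (p - 1) with hqdef
  have hq0 : 0 < q := div_pos (by linarith) hp1'
  set c : ℝ := 1 / (p - 1) with hcdef
  have hc0 : 0 < c := by rw [hcdef]; positivity
  set h : ℝ → ℝ := fun y => y ^ α * (β * y + t * y ^ α) ^ (-(p / (p - 1))) with hhdef
  have hg_pos : ∀ r : ℝ, 0 < r → 0 < β * r + t * r ^ α := by
    intro r hr; positivity
  have hh_pos : ∀ r : ℝ, 0 < r → 0 < h r := by
    intro r hr
    exact mul_pos (Real.rpow_pos_of_pos hr α) (Real.rpow_pos_of_pos (hg_pos r hr) _)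
  set D : ℝ → ℝ := fun r => p * h r / (β * r + t * r ^ α) - ((N:ℝ) - 1) * h r / r with hDdef
  have hh_deriv : ∀ r : ℝ, 0 < r → HasDerivAt h (D r) r := by
    intro r hr
    exact aux_h_deriv p (N:ℝ) α β t hp hβ0 ht hα hβeq hr
  have hh_contOn : ContinuousOn h (Ioi 0) := fun r hr =>
    ((hh_deriv r hr).differentiableAt.continuousAt).continuousWithinAt
  have hh_int : ∀ r : ℝ, 0 < r → IntervalIntegrable h MeasureTheory.volume r 1 := by
    intro r hr
    apply (hh_contOn.mono ?_).intervalIntegrable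
    intro y hy
    exact lt_of_lt_of_le (lt_min hr one_pos) hy.1
  have hψt_deriv : ∀ r : ℝ, 0 < r → HasDerivAt ψt (-(c * h r)) r := by
    intro r hr
    have hfun : ψt = fun u => c * ∫ y in u..(1:ℝ), h y := funext hψt
    rw [hfun]
    have hd := (intervalIntegral.integral_hasDerivAt_left (hh_int r hr)
      (ContinuousOn.stronglyMeasurableAtFilter isOpen_Ioi hh_contOn r hr)
      (hh_contOn.continuousAt (isOpen_Ioi.mem_nhds hr))).const_mul c
    exact hd.congr_deriv (by ring)
  set G : ℝ → ℝ := fun s => ψt (Real.sqrt s) with hGdef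
  set G1 : ℝ → ℝ := fun s => -(c * h (Real.sqrt s)) / (2 * Real.sqrt s) with hG1def
  set G2 : ℝ → ℝ := fun s =>
    (-(c * (D (Real.sqrt s) * (1 / (2 * Real.sqrt s)))) * (2 * Real.sqrt s)
      - -(c * h (Real.sqrt s)) * (2 * (1 / (2 * Real.sqrt s)))) / (2 * Real.sqrt s) ^ 2 with hG2def
  have hG_deriv : ∀ s : ℝ, 0 < s → HasDerivAt G (G1 s) s := by
    intro s hs
    have hrs : 0 < Real.sqrt s := Real.sqrt_pos.mpr hs
    have h1 := (hψt_deriv _ hrs).comp s (Real.hasDerivAt_sqrt hs.ne')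
    have he : G1 s = -(c * h (Real.sqrt s)) * (1 / (2 * Real.sqrt s)) := by
      simp only [hG1def]; rw [mul_one_div]
    rw [he]; exact h1
  have hG1_deriv : ∀ s : ℝ, 0 < s → HasDerivAt G1 (G2 s) s := by
    intro s hs
    have hrs : 0 < Real.sqrt s := Real.sqrt_pos.mpr hs
    have hu : HasDerivAt (fun z : ℝ => -(c * h (Real.sqrt z)))
        (-(c * (D (Real.sqrt s) * (1 / (2 * Real.sqrt s))))) s := by
      exact (((hh_deriv _ hrs).comp s (Real.hasDerivAt_sqrt hs.ne')).const_mul c).neg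
    have hv : HasDerivAt (fun z : ℝ => 2 * Real.sqrt z) (2 * (1 / (2 * Real.sqrt s))) s :=
      (Real.hasDerivAt_sqrt hs.ne').const_mul 2
    exact hu.div hv (by positivity)
  have hG1_eval : ∀ r : ℝ, 0 < r → G1 (r ^ 2) = -(c * h r) / (2 * r) := by
    intro r hr
    simp only [hG1def, Real.sqrt_sq hr.le]
  have hlap_id : ∀ r : ℝ, 0 < r → 4 * r ^ 2 * G2 (r ^ 2) = -(c * D r) + c * h r / r := by
    intro r hr
    simp only [hG2def, Real.sqrt_sq hr.le]
    field_simp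
    ring
  have hψG : ψ = fun y : EuclideanSpace ℝ (Fin N) => G (inner ℝ y y : ℝ) := by
    funext y
    rw [hψ y]
    simp only [hGdef]
    rw [real_inner_self_eq_norm_sq, Real.sqrt_sq (norm_nonneg y)]
  have hinner : ∀ y : EuclideanSpace ℝ (Fin N),
      HasFDerivAt (fun z : EuclideanSpace ℝ (Fin N) => (inner ℝ z z : ℝ))
        ((fderivInnerCLM ℝ (y, y)).comp
          ((ContinuousLinearMap.id ℝ _).prod (ContinuousLinearMap.id ℝ _))) y :=
    fun y => (hasFDerivAt_id y).inner ℝ (hasFDerivAt_id y)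
  set L : EuclideanSpace ℝ (Fin N) → EuclideanSpace ℝ (Fin N) →L[ℝ] ℝ := fun y =>
    (fderivInnerCLM ℝ (y, y)).comp
      ((ContinuousLinearMap.id ℝ _).prod (ContinuousLinearMap.id ℝ _)) with hLdef
  have hL_apply : ∀ y v : EuclideanSpace ℝ (Fin N),
      L y v = (inner ℝ y v : ℝ) + (inner ℝ v y : ℝ) := by
    intro y v; simp [hLdef]
  have hxxpos : ∀ y : EuclideanSpace ℝ (Fin N), y ≠ 0 → 0 < (inner ℝ y y : ℝ) := by
    intro y hy
    rw [real_inner_self_eq_norm_sq]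
    exact pow_pos (norm_pos_iff.mpr hy) 2
  have hψ_fderiv : ∀ y : EuclideanSpace ℝ (Fin N), y ≠ 0 →
      HasFDerivAt ψ ((G1 (inner ℝ y y : ℝ)) • L y) y := by
    intro y hy
    have h1 := HasDerivAt.comp_hasFDerivAt
      (f := fun z : EuclideanSpace ℝ (Fin N) => (inner ℝ z z : ℝ)) y
      (hG_deriv _ (hxxpos y hy)) (hinner y)
    rw [hψG]; exact h1
  refine ⟨?_, ?_, ?_⟩
  · -- PDE
    rintro x ⟨hx1, hx0⟩
    rw [mem_ball_zero_iff] at hx1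
    have hx0 : x ≠ 0 := by simpa using hx0
    have hr : 0 < ‖x‖ := norm_pos_iff.mpr hx0
    have hs : (inner ℝ x x : ℝ) = ‖x‖ ^ 2 := real_inner_self_eq_norm_sq x
    have hxx : 0 < (inner ℝ x x : ℝ) := hxxpos x hx0
    have hterm : ∀ i : Fin N,
        fderiv ℝ (fun y => fderiv ℝ ψ y (EuclideanSpace.single i 1)) x
          (EuclideanSpace.single i 1)
        = 2 * G1 (inner ℝ x x : ℝ) + G2 (inner ℝ x x : ℝ) * (2 * x i) * (2 * x i) := by
      intro i
      set e : EuclideanSpace ℝ (Fin N) := EuclideanSpace.single i 1 with hedef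
      set Fi : EuclideanSpace ℝ (Fin N) → ℝ :=
        fun y => G1 (inner ℝ y y : ℝ) * (2 * (inner ℝ e y : ℝ)) with hFidef
      have heq : (fun y => fderiv ℝ ψ y e) =ᶠ[𝓝 x] Fi := by
        filter_upwards [isOpen_compl_singleton.mem_nhds (by simpa using hx0)] with y hy
        have hy' : y ≠ 0 := by simpa using hy
        rw [(hψ_fderiv y hy').fderiv]
        simp only [ContinuousLinearMap.coe_smul', Pi.smul_apply, smul_eq_mul, hFidef]
        rw [hL_apply, real_inner_comm y e]
        ring
      have hc' : HasFDerivAt (fun y : EuclideanSpace ℝ (Fin N) => G1 (inner ℝ y y : ℝ))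
          ((G2 (inner ℝ x x : ℝ)) • L x) x :=
        HasDerivAt.comp_hasFDerivAt
          (f := fun z : EuclideanSpace ℝ (Fin N) => (inner ℝ z z : ℝ)) x
          (hG1_deriv _ hxx) (hinner x)
      have hd' : HasFDerivAt (fun y : EuclideanSpace ℝ (Fin N) => 2 * (inner ℝ e y : ℝ))
          ((2:ℝ) • (innerSL ℝ e)) x :=
        (innerSL ℝ e).hasFDerivAt.const_mul 2
      have hFi : HasFDerivAt Fi _ x := hc'.mul hd'
      rw [heq.fderiv_eq, hFi.fderiv]
      have he1 : (inner ℝ e e : ℝ) = 1 := by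
        simp [hedef, EuclideanSpace.inner_single_left, EuclideanSpace.single_apply]
      have he2 : (inner ℝ e x : ℝ) = x i := by
        simp [hedef, EuclideanSpace.inner_single_left]
      have he3 : (inner ℝ x e : ℝ) = x i := by
        simp [hedef, EuclideanSpace.inner_single_right]
      simp only [ContinuousLinearMap.add_apply, ContinuousLinearMap.coe_smul',
        Pi.smul_apply, smul_eq_mul, innerSL_apply_apply, hL_apply, he1, he2, he3]
      ring
    have hlap : lap ψ x = 2 * N * G1 (inner ℝ x x : ℝ)
        + 4 * G2 (inner ℝ x x : ℝ) * (inner ℝ x x : ℝ) := by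
      rw [lap]
      rw [Finset.sum_congr rfl (fun i _ => hterm i)]
      rw [Finset.sum_add_distrib, Finset.sum_const, Finset.card_univ, Fintype.card_fin]
      have hsum : (inner ℝ x x : ℝ) = ∑ i, x i * x i := by
        rw [real_inner_self_eq_norm_sq, EuclideanSpace.norm_eq,
          Real.sq_sqrt (Finset.sum_nonneg (fun i _ => sq_nonneg _))]
        simp only [Real.norm_eq_abs, sq_abs, sq, abs_mul_abs_self]
      rw [nsmul_eq_mul]
      have hsum2 : ∑ i, (G2 (inner ℝ x x : ℝ) * (2 * x i) * (2 * x i))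
          = 4 * G2 (inner ℝ x x : ℝ) * ∑ i, x i * x i := by
        rw [Finset.mul_sum]
        apply Finset.sum_congr rfl
        intro i _
        ring
      rw [hsum2, ← hsum]
      push_cast
      ring
    have hgr2 : HasGradientAt ψ ((G1 (inner ℝ x x : ℝ) * 2) • x) x := by
      rw [hasGradientAt_iff_hasFDerivAt]
      refine (hψ_fderiv x hx0).congr_fderiv ?_
      symm
      ext v
      rw [InnerProductSpace.toDual_apply_apply]
      simp only [ContinuousLinearMap.coe_smul', Pi.smul_apply, smul_eq_mul]
      rw [hL_apply, real_inner_smul_left, real_inner_comm v x]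
      ring
    have hinn : (inner ℝ x (gradient ψ x) : ℝ)
        = G1 (inner ℝ x x : ℝ) * 2 * (inner ℝ x x : ℝ) := by
      rw [hgr2.gradient, real_inner_smul_right]
    rw [hlap, hinn]
    have hdenom : β * ‖x‖ ^ 2 + t * ‖x‖ ^ (α + 1) = ‖x‖ * (β * ‖x‖ + t * ‖x‖ ^ α) := by
      rw [Real.rpow_add_one hr.ne']
      ring
    have h4 : 4 * G2 (inner ℝ x x : ℝ) * (inner ℝ x x : ℝ)
        = -(c * D ‖x‖) + c * h ‖x‖ / ‖x‖ := by
      rw [hs, ← hlap_id ‖x‖ hr]; ring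
    rw [h4, hs, hG1_eval ‖x‖ hr, hdenom]
    simp only [hDdef]
    have hgx : β * ‖x‖ + t * ‖x‖ ^ α ≠ 0 := (hg_pos ‖x‖ hr).ne'
    field_simp
    ring
  · intro x hx1
    rw [hψ x, hx1, hψt 1, intervalIntegral.integral_same, mul_zero]
  · refine ⟨c * (β ^ (-q) / (α - 1)) + c * β ^ (-q), ?_⟩
    rintro r ⟨hr, hr1⟩
    have hβq : (0:ℝ) < β ^ (-q) := Real.rpow_pos_of_pos hβ0 _
    have hexp1 : σ + (α - q) = α - 2 := by
      rw [hσ, hqdef]; field_simp; ring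
    have hexp2 : (σ + 1) + (α - q) = α - 1 := by
      rw [hσ, hqdef]; field_simp; ring
    have hhb : ∀ y : ℝ, 0 < y → h y ≤ β ^ (-q) * y ^ (α - q) := by
      intro y hy
      have h1 : (β * y + t * y ^ α) ^ (-q) ≤ (β * y) ^ (-q) := by
        apply Real.rpow_le_rpow_of_nonpos (by positivity) ?_ (by linarith [hq0])
        nlinarith [Real.rpow_pos_of_pos hy α]
      calc h y = y ^ α * (β * y + t * y ^ α) ^ (-q) := rfl
        _ ≤ y ^ α * (β * y) ^ (-q) :=
            mul_le_mul_of_nonneg_left h1 (Real.rpow_nonneg hy.le α)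
        _ = β ^ (-q) * y ^ (α - q) := by
            rw [Real.mul_rpow hβ0.le hy.le,
              show α - q = α + (-q) by ring, Real.rpow_add hy]
            ring
    -- derivative part
    have hder : deriv ψt r = -(c * h r) := (hψt_deriv r hr).deriv
    have habs2 : |deriv ψt r| = c * h r := by
      rw [hder, abs_neg, abs_of_nonneg (mul_pos hc0 (hh_pos r hr)).le]
    have hd2 : r ^ (σ + 1) * |deriv ψt r| ≤ c * β ^ (-q) := by
      rw [habs2]
      calc r ^ (σ + 1) * (c * h r)
          ≤ r ^ (σ + 1) * (c * (β ^ (-q) * r ^ (α - q))) := by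
            apply mul_le_mul_of_nonneg_left
              (mul_le_mul_of_nonneg_left (hhb r hr) hc0.le)
              (Real.rpow_nonneg hr.le _)
        _ = c * β ^ (-q) * r ^ (α - 1) := by
            have hrr : r ^ (σ + 1) * r ^ (α - q) = r ^ (α - 1) := by
              rw [← Real.rpow_add hr, hexp2]
            rw [← hrr]; ring
        _ ≤ c * β ^ (-q) * 1 :=
            mul_le_mul_of_nonneg_left
              (Real.rpow_le_one hr.le hr1 (by linarith)) (by positivity)
        _ = c * β ^ (-q) := mul_one _
    -- integral part
    have hψnn : 0 ≤ ∫ y in r..(1:ℝ), h y :=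
      intervalIntegral.integral_nonneg hr1
        (fun y hy => (hh_pos y (lt_of_lt_of_le hr hy.1)).le)
    have habs1 : |ψt r| = c * ∫ y in r..(1:ℝ), h y := by
      rw [hψt r, abs_of_nonneg (mul_nonneg hc0.le hψnn)]
    have hmono : ∫ y in r..(1:ℝ), r ^ σ * h y
        ≤ ∫ y in r..(1:ℝ), β ^ (-q) * y ^ (α - 2) := by
      apply intervalIntegral.integral_mono_on hr1
      · exact (hh_int r hr).const_mul _
      · have hcont : ContinuousOn (fun y : ℝ => β ^ (-q) * y ^ (α - 2)) (Set.uIcc r 1) := by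
          intro y hy
          have hy0 : 0 < y := lt_of_lt_of_le (lt_min hr one_pos) hy.1
          exact (continuousAt_const.mul
            (Real.continuousAt_rpow_const y _ (Or.inl hy0.ne'))).continuousWithinAt
        exact hcont.intervalIntegrable
      · intro y hy
        have hy0 : 0 < y := lt_of_lt_of_le hr hy.1
        calc r ^ σ * h y
            ≤ r ^ σ * (β ^ (-q) * y ^ (α - q)) :=
              mul_le_mul_of_nonneg_left (hhb y hy0) (Real.rpow_nonneg hr.le σ)
          _ ≤ y ^ σ * (β ^ (-q) * y ^ (α - q)) := by
              apply mul_le_mul_of_nonneg_right (Real.rpow_le_rpow hr.le hy.1 hσ0.le)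
              positivity
          _ = β ^ (-q) * y ^ (α - 2) := by
              have hyy : y ^ σ * y ^ (α - q) = y ^ (α - 2) := by
                rw [← Real.rpow_add hy0, hexp1]
              rw [← hyy]; ring
    have hint2 : ∫ y in r..(1:ℝ), β ^ (-q) * y ^ (α - 2) ≤ β ^ (-q) / (α - 1) := by
      rw [intervalIntegral.integral_const_mul,
        integral_rpow (Or.inl (by linarith : (-1:ℝ) < α - 2))]
      rw [Real.one_rpow, (by ring : α - 2 + 1 = α - 1)]
      have h1 : (1 - r ^ (α - 1)) / (α - 1) ≤ 1 / (α - 1) := by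
        apply div_le_div_of_nonneg_right ?_ (by linarith : (0:ℝ) ≤ α - 1)
        nlinarith [Real.rpow_nonneg hr.le (α - 1)]
      calc β ^ (-q) * ((1 - r ^ (α - 1)) / (α - 1))
          ≤ β ^ (-q) * (1 / (α - 1)) := mul_le_mul_of_nonneg_left h1 hβq.le
        _ = β ^ (-q) / (α - 1) := by ring
    have hd1 : r ^ σ * |ψt r| ≤ c * (β ^ (-q) / (α - 1)) := by
      rw [habs1, ← mul_assoc, mul_comm (r ^ σ) c, mul_assoc,
        ← intervalIntegral.integral_const_mul]
      calc c * ∫ y in r..(1:ℝ), r ^ σ * h y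
          ≤ c * ∫ y in r..(1:ℝ), β ^ (-q) * y ^ (α - 2) :=
            mul_le_mul_of_nonneg_left hmono hc0.le
        _ ≤ c * (β ^ (-q) / (α - 1)) := mul_le_mul_of_nonneg_left hint2 hc0.le
    linarith [hd1, hd2]
end

section
/- Let N ≥ 3 be an integer, N/(N−1) < p < 2, α := (p−1)(N−1), β := (p−1)/(α−1), σ := (2−p)/(p−1). Then there exists C > 0 such that for every t ≥ 1 and every continuous function b : (0,1] → ℝ with sup_{0<r≤1} r^{σ+2}|b(r)| ≤ 1, there exists a twice continuously differentiable function a : (0,1] → ℝ with a(1) = 0 satisfying the ordinary differential equation −a''(r) − (N−1)a'(r)/r + p·a'(r)/(β r + t r^α) = b(r) for all 0 < r < 1, together with the uniform estimate sup_{0<r≤1} r^{σ+1}|a'(r)| ≤ C. -/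
open Set Filter
open scoped Topology

private lemma mu_deriv (p α β γ c₁ t x : ℝ) (hp : 1 < p) (hα : 1 < α)
    (hβd : β = (p - 1) / (α - 1)) (hγd : γ = p / (p - 1)) (hcd : c₁ = α / (p - 1))
    (ht : 0 ≤ t) (hx : 0 < x) :
    HasDerivAt (fun y => y ^ (α - γ) * (β + t * y ^ (α - 1)) ^ (-γ))
      ((-(c₁ / x) + p / (β * x + t * x ^ α)) * (x ^ (α - γ) * (β + t * x ^ (α - 1)) ^ (-γ))) x := by
  have hp1 : (0:ℝ) < p - 1 := by linarith
  have hα1 : (0:ℝ) < α - 1 := by linarith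
  have hβ0 : 0 < β := by rw [hβd]; positivity
  have hX : 0 < x ^ (α - 1) := Real.rpow_pos_of_pos hx _
  have hW : 0 < β + t * x ^ (α - 1) := by positivity
  have h1 : HasDerivAt (fun y : ℝ => y ^ (α - γ)) ((α - γ) * x ^ (α - γ - 1)) x :=
    Real.hasDerivAt_rpow_const (Or.inl hx.ne')
  have h2 : HasDerivAt (fun y : ℝ => β + t * y ^ (α - 1))
      (t * ((α - 1) * x ^ (α - 1 - 1))) x :=
    (((Real.hasDerivAt_rpow_const (p := α - 1) (Or.inl hx.ne')).const_mul t).const_add β)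
  have h3 : HasDerivAt (fun y : ℝ => (β + t * y ^ (α - 1)) ^ (-γ))
      ((t * ((α - 1) * x ^ (α - 1 - 1))) * (-γ) * (β + t * x ^ (α - 1)) ^ (-γ - 1)) x :=
    h2.rpow_const (Or.inl hW.ne')
  have h4 := h1.fun_mul h3
  refine h4.congr_deriv ?_
  have e1 : x ^ (α - γ - 1) = x ^ (α - γ) / x := by
    rw [show α - γ - 1 = (α - γ) - 1 by ring, Real.rpow_sub hx, Real.rpow_one]
  have e2 : (β + t * x ^ (α - 1)) ^ (-γ - 1)
      = (β + t * x ^ (α - 1)) ^ (-γ) / (β + t * x ^ (α - 1)) := by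
    rw [show -γ - 1 = (-γ) - 1 by ring, Real.rpow_sub hW, Real.rpow_one]
  have e3 : x ^ (α - 1 - 1) = x ^ (α - 1) / x := by
    rw [show α - 1 - 1 = (α - 1) - 1 by ring, Real.rpow_sub hx, Real.rpow_one]
  have e4 : x ^ α = x ^ (α - 1) * x := by
    nth_rewrite 1 [show α = (α - 1) + 1 by ring]
    rw [Real.rpow_add hx, Real.rpow_one]
  rw [e1, e2, e3, e4, hβd, hγd, hcd]
  have hA : x ^ (α - γ) ≠ 0 := (Real.rpow_pos_of_pos hx _).ne'
  have hB : (β + t * x ^ (α - 1)) ^ (-γ) ≠ 0 := (Real.rpow_pos_of_pos hW _).ne'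
  have hWne : β + t * x ^ (α - 1) ≠ 0 := hW.ne'
  rw [hβd] at hWne
  field_simp
  ring

set_option maxHeartbeats 1000000 in
/-- the `k = 0` (radial) mode of the linearized operator: uniform-in-`t`
solvability of the ODE `-a'' - (N-1)a'/r + p a'/(βr + tr^α) = b` on `(0,1)` with `a(1) = 0`
and the weighted estimate `sup r^{σ+1}|a'(r)| ≤ C`. -/
theorem stmt_9 (N : ℕ) (hN : 3 ≤ N) (p : ℝ)
    (hp1 : (N : ℝ) / ((N : ℝ) - 1) < p) (hp2 : p < 2)
    (α β σ : ℝ) (hα : α = (p - 1) * ((N : ℝ) - 1)) (hβ : β = (p - 1) / (α - 1))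
    (hσ : σ = (2 - p) / (p - 1)) :
    ∃ C > (0 : ℝ), ∀ t : ℝ, 1 ≤ t → ∀ b : ℝ → ℝ,
      ContinuousOn b (Ioc (0 : ℝ) 1) →
      (∀ r ∈ Ioc (0 : ℝ) 1, r ^ (σ + 2) * |b r| ≤ 1) →
      ∃ a : ℝ → ℝ,
        ContDiffOn ℝ 2 a (Ioc (0 : ℝ) 1) ∧
        a 1 = 0 ∧
        (∀ r ∈ Ioo (0 : ℝ) 1,
          -(deriv (deriv a) r) - ((N : ℝ) - 1) * deriv a r / r
            + p * deriv a r / (β * r + t * r ^ α) = b r) ∧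
        (∀ r ∈ Ioc (0 : ℝ) 1, r ^ (σ + 1) * |deriv a r| ≤ C) := by
  -- basic facts
  have hN3 : (3:ℝ) ≤ (N:ℝ) := by exact_mod_cast hN
  have hN1 : (0:ℝ) < (N:ℝ) - 1 := by linarith
  have hp : 1 < p := by
    have h1 : (1:ℝ) < (N:ℝ)/((N:ℝ)-1) := (one_lt_div hN1).2 (by linarith)
    linarith
  have hpm : (0:ℝ) < p - 1 := by linarith
  have hNp : (N:ℝ) < p * ((N:ℝ)-1) := (div_lt_iff₀ hN1).1 hp1
  have hα1 : (1:ℝ) < α := by rw [hα]; nlinarith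
  have hαm : (0:ℝ) < α - 1 := by linarith
  have hβ0 : (0:ℝ) < β := by rw [hβ]; positivity
  set γ := p / (p - 1) with hγd
  have hσ2 : σ + 2 = γ := by rw [hσ, hγd]; field_simp; ring
  have hγ2 : 2 < γ := by rw [hγd, lt_div_iff₀ hpm]; linarith
  have hγ0 : 0 < γ := by linarith
  have hσ1 : σ + 1 = γ - 1 := by linarith
  set c₁ := (N:ℝ) - 1 with hc₁
  have hcd : c₁ = α / (p - 1) := by rw [hα]; field_simp
  have h2γ : (0:ℝ) < 2 ^ γ := Real.rpow_pos_of_pos two_pos γ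
  have hd1 : (0:ℝ) < 1/(α-1) := one_div_pos.mpr hαm
  have hd2 : (0:ℝ) < 1/((α-1)*(γ-1)) := one_div_pos.mpr (mul_pos hαm (by linarith))
  -- the constant
  refine ⟨2 ^ γ * (1/(α-1) + 1/((α-1)*(γ-1))), mul_pos h2γ (by linarith), ?_⟩
  intro t ht b hbc hble
  have ht0 : (0:ℝ) < t := by linarith
  -- the switching point r₀
  set s₀ : ℝ := (β / t) ^ (1/(α-1)) with hs₀d
  have hs₀0 : 0 < s₀ := Real.rpow_pos_of_pos (by positivity) _
  have hs₀pow : s₀ ^ (α - 1) = β / t := by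
    rw [hs₀d, one_div, Real.rpow_inv_rpow (by positivity) (by linarith)]
  set r₀ : ℝ := min 1 s₀ with hr₀d
  have hr₀0 : 0 < r₀ := lt_min one_pos hs₀0
  have hr₀1 : r₀ ≤ 1 := min_le_left _ _
  -- extended b
  set bt := fun x : ℝ => b (min x 1) with hbtd
  have hbtc : ContinuousOn bt (Ioi (0:ℝ)) := by
    apply hbc.comp ((continuous_id.min continuous_const).continuousOn)
    intro x hx
    exact ⟨lt_min hx one_pos, min_le_right _ _⟩
  have hbt_eq : ∀ s ∈ Ioc (0:ℝ) 1, bt s = b s := by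
    intro s hs
    simp only [hbtd, min_eq_left hs.2]
  -- the integrating factor
  set μ := fun x : ℝ => x ^ (α - γ) * (β + t * x ^ (α-1)) ^ (-γ) with hμd
  have hWpos : ∀ x : ℝ, 0 < x → 0 < β + t * x ^ (α - 1) := by
    intro x hx
    have := Real.rpow_pos_of_pos hx (α - 1)
    positivity
  have hμpos : ∀ x ∈ Ioi (0:ℝ), 0 < μ x := by
    intro x hx
    exact mul_pos (Real.rpow_pos_of_pos hx _) (Real.rpow_pos_of_pos (hWpos x hx) _)
  have hdenpos : ∀ x : ℝ, 0 < x → 0 < β * x + t * x ^ α := by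
    intro x hx
    have := Real.rpow_pos_of_pos hx α
    positivity
  have hμdv : ∀ x ∈ Ioi (0:ℝ),
      HasDerivAt μ ((-(c₁/x) + p/(β*x + t*x^α)) * μ x) x := by
    intro x hx
    exact mu_deriv p α β γ c₁ t x hp hα1 hβ hγd hcd ht0.le hx
  have hμc : ContinuousOn μ (Ioi 0) := fun x hx =>
    (hμdv x hx).continuousAt.continuousWithinAt
  -- the integrand
  set w := fun s : ℝ => bt s / μ s with hwd
  have hwc : ContinuousOn w (Ioi 0) := hbtc.div hμc (fun x hx => (hμpos x hx).ne')
  have hsubI : ∀ x y : ℝ, 0 < x → 0 < y → uIcc x y ⊆ Ioi (0:ℝ) := by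
    intro x y hx hy z hz
    exact lt_of_lt_of_le (lt_min hx hy) hz.1
  have hInt : ∀ x y : ℝ, 0 < x → 0 < y → IntervalIntegrable w MeasureTheory.volume x y :=
    fun x y hx hy => (hwc.mono (hsubI x y hx hy)).intervalIntegrable
  set B := fun r : ℝ => ∫ s in r₀..r, w s with hBdef
  have hBdv : ∀ x ∈ Ioi (0:ℝ), HasDerivAt B (w x) x := by
    intro x hx
    exact intervalIntegral.integral_hasDerivAt_right (hInt r₀ x hr₀0 hx)
      (hwc.stronglyMeasurableAtFilter isOpen_Ioi x hx)
      (hwc.continuousAt (isOpen_Ioi.mem_nhds hx))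
  set u := fun r : ℝ => -(μ r * B r) with hud
  have hμw : ∀ x ∈ Ioi (0:ℝ), μ x * w x = bt x := by
    intro x hx
    simp only [hwd]
    field_simp [(hμpos x hx).ne']
  have hudv : ∀ x ∈ Ioi (0:ℝ),
      HasDerivAt u ((-(c₁/x) + p/(β*x + t*x^α)) * u x - bt x) x := by
    intro x hx
    have h := ((hμdv x hx).fun_mul (hBdv x hx)).fun_neg
    refine h.congr_deriv ?_
    simp only [hud]
    rw [← hμw x hx]
    ring
  have huc : ContinuousOn u (Ioi 0) := fun x hx =>
    (hudv x hx).continuousAt.continuousWithinAt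
  have hIntu : ∀ x y : ℝ, 0 < x → 0 < y → IntervalIntegrable u MeasureTheory.volume x y :=
    fun x y hx hy => (huc.mono (hsubI x y hx hy)).intervalIntegrable
  set a := fun r : ℝ => ∫ s in (1:ℝ)..r, u s with had
  have hadv : ∀ x ∈ Ioi (0:ℝ), HasDerivAt a (u x) x := by
    intro x hx
    exact intervalIntegral.integral_hasDerivAt_right (hIntu 1 x one_pos hx)
      (huc.stronglyMeasurableAtFilter isOpen_Ioi x hx)
      (huc.continuousAt (isOpen_Ioi.mem_nhds hx))
  have hda : ∀ x ∈ Ioi (0:ℝ), deriv a x = u x := fun x hx => (hadv x hx).deriv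
  have hdda : ∀ x ∈ Ioi (0:ℝ),
      deriv (deriv a) x = (-(c₁/x) + p/(β*x + t*x^α)) * u x - bt x := by
    intro x hx
    have hev : deriv a =ᶠ[𝓝 x] u :=
      Filter.eventuallyEq_of_mem (isOpen_Ioi.mem_nhds hx) hda
    rw [hev.deriv_eq]
    exact (hudv x hx).deriv
  -- continuity of the coefficient
  have hqc : ContinuousOn (fun x : ℝ => -(c₁/x) + p/(β*x + t*x^α)) (Ioi 0) := by
    apply ContinuousOn.add
    · exact (continuousOn_const.div continuousOn_id (fun x hx => ne_of_gt hx)).neg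
    · apply continuousOn_const.div
      · exact (continuousOn_const.mul continuousOn_id).add
          (continuousOn_const.mul (continuousOn_id.rpow_const
            (fun x hx => Or.inl (ne_of_gt hx))))
      · exact fun x hx => (hdenpos x hx).ne'
  refine ⟨a, ?_, ?_, ?_, ?_⟩
  · -- ContDiffOn
    have h2 : ContDiffOn ℝ 2 a (Ioi 0) := by
      rw [show (2 : WithTop ℕ∞) = 1 + 1 by norm_num,
        contDiffOn_succ_iff_deriv_of_isOpen isOpen_Ioi]
      refine ⟨fun x hx => (hadv x hx).differentiableAt.differentiableWithinAt,
        by simp, ?_⟩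
      have h1 : ContDiffOn ℝ 1 u (Ioi 0) := by
        rw [show (1 : WithTop ℕ∞) = 0 + 1 by norm_num,
          contDiffOn_succ_iff_deriv_of_isOpen isOpen_Ioi]
        refine ⟨fun x hx => (hudv x hx).differentiableAt.differentiableWithinAt,
          by simp, ?_⟩
        rw [contDiffOn_zero]
        apply ContinuousOn.congr ((hqc.mul huc).sub hbtc)
        intro x hx
        exact (hudv x hx).deriv
      exact h1.congr hda
    exact h2.mono (fun x hx => hx.1)
  · simp [had]
  · -- the ODE
    intro r hr
    have hr0 : (0:ℝ) < r := hr.1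
    have hrI : r ∈ Ioi (0:ℝ) := hr0
    rw [hda r hrI, hdda r hrI, hbt_eq r ⟨hr.1, hr.2.le⟩]
    have h1 : r ≠ 0 := hr0.ne'
    have h2 : β * r + t * r ^ α ≠ 0 := (hdenpos r hr0).ne'
    field_simp
    ring
  · -- the estimate
    intro r hr
    have hr0 : (0:ℝ) < r := hr.1
    have hrI : r ∈ Ioi (0:ℝ) := hr0
    rw [hda r hrI]
    have hWr : 0 < β + t * r ^ (α - 1) := hWpos r hr0
    have hXr : 0 < r ^ (α - 1) := Real.rpow_pos_of_pos hr0 _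
    have habs : |u r| = μ r * |B r| := by
      simp only [hud]
      rw [abs_neg, abs_mul, abs_of_pos (hμpos r hrI)]
    rw [habs]
    -- pointwise bound of |w| in terms of powers
    have hwbound : ∀ s : ℝ, 0 < s → s ≤ 1 →
        |w s| ≤ s ^ (-α) * (β + t * s ^ (α-1)) ^ γ := by
      intro s hs0 hs1
      have hWs : 0 < β + t * s ^ (α - 1) := hWpos s hs0
      have hb1 : |bt s| ≤ (s ^ γ)⁻¹ := by
        rw [hbt_eq s ⟨hs0, hs1⟩]
        have h := hble s ⟨hs0, hs1⟩
        rw [hσ2] at h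
        rw [← one_div, le_div_iff₀ (Real.rpow_pos_of_pos hs0 γ)]
        linarith [h, mul_comm (s ^ γ) |b s|]
      have hμinv : (μ s)⁻¹ = s ^ (γ - α) * (β + t * s ^ (α-1)) ^ γ := by
        simp only [hμd]
        rw [mul_inv, ← Real.rpow_neg hs0.le, ← Real.rpow_neg hWs.le, neg_neg,
          show -(α - γ) = γ - α by ring]
      have hws : |w s| = |bt s| * (μ s)⁻¹ := by
        simp only [hwd]
        rw [abs_div, abs_of_pos (hμpos s hs0), div_eq_mul_inv]
      rw [hws, hμinv]
      calc |bt s| * (s ^ (γ - α) * (β + t * s ^ (α-1)) ^ γ)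
          ≤ (s ^ γ)⁻¹ * (s ^ (γ - α) * (β + t * s ^ (α-1)) ^ γ) := by
            apply mul_le_mul_of_nonneg_right hb1
            positivity
        _ = s ^ (-α) * (β + t * s ^ (α-1)) ^ γ := by
            rw [← Real.rpow_neg hs0.le, ← mul_assoc, ← Real.rpow_add hs0,
              show -γ + (γ - α) = -α by ring]
    rcases le_or_gt r r₀ with hcase | hcase
    · -- small region : t s^(α-1) ≤ β
      have hpt : ∀ s ∈ Icc r r₀, |w s| ≤ (2*β) ^ γ * s ^ (-α) := by
        intro s hs
        have hs0 : 0 < s := lt_of_lt_of_le hr0 hs.1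
        have hs1 : s ≤ 1 := hs.2.trans hr₀1
        have hY : t * s ^ (α-1) ≤ β := by
          have h1 : s ≤ s₀ := hs.2.trans (min_le_right 1 s₀)
          have h2 : s ^ (α-1) ≤ s₀ ^ (α-1) := Real.rpow_le_rpow hs0.le h1 (by linarith)
          rw [hs₀pow] at h2
          calc t * s ^ (α-1) ≤ t * (β/t) := mul_le_mul_of_nonneg_left h2 ht0.le
            _ = β := by field_simp
        have hW2 : β + t * s ^ (α-1) ≤ 2*β := by linarith
        calc |w s| ≤ s ^ (-α) * (β + t * s ^ (α-1)) ^ γ := hwbound s hs0 hs1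
          _ ≤ s ^ (-α) * (2*β) ^ γ := by
              apply mul_le_mul_of_nonneg_left _ (Real.rpow_nonneg hs0.le _)
              exact Real.rpow_le_rpow (hWpos s hs0).le hW2 hγ0.le
          _ = (2*β) ^ γ * s ^ (-α) := mul_comm _ _
      have hBbd : |B r| ≤ (2*β) ^ γ * (r ^ (-α+1) / (α-1)) := by
        have h1 : |B r| ≤ ∫ s in r..r₀, |w s| := by
          have hsymm : B r = -∫ s in r..r₀, w s := by
            simp only [hBdef]
            exact intervalIntegral.integral_symm r r₀
          rw [hsymm, abs_neg]
          exact intervalIntegral.abs_integral_le_integral_abs hcase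
        have h2 : ∫ s in r..r₀, |w s| ≤ ∫ s in r..r₀, (2*β) ^ γ * s ^ (-α) := by
          apply intervalIntegral.integral_mono_on hcase
          · exact ((hwc.mono (hsubI r r₀ hr0 hr₀0)).abs).intervalIntegrable
          · apply ContinuousOn.intervalIntegrable
            apply continuousOn_const.mul
            apply ContinuousOn.rpow_const (continuousOn_id.mono (hsubI r r₀ hr0 hr₀0))
            exact fun x hx => Or.inl (ne_of_gt (hsubI r r₀ hr0 hr₀0 hx))
          · exact hpt
        have h3 : ∫ s in r..r₀, (2*β) ^ γ * s ^ (-α)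
            = (2*β) ^ γ * ((r₀ ^ (-α+1) - r ^ (-α+1)) / (-α+1)) := by
          rw [intervalIntegral.integral_const_mul, integral_rpow]
          right
          refine ⟨fun h => by linarith [neg_injective h], fun h => ?_⟩
          exact absurd h.1 (not_le.mpr (lt_min hr0 hr₀0))
        have h4 : (r₀ ^ (-α+1) - r ^ (-α+1)) / (-α+1) ≤ r ^ (-α+1) / (α-1) := by
          rw [show (-α+1:ℝ) = -(α-1) by ring, div_neg, ← neg_div, neg_sub]
          have hA0 : (0:ℝ) ≤ r₀ ^ (-(α-1)) := Real.rpow_nonneg hr₀0.le _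
          exact (div_le_div_iff_of_pos_right hαm).mpr (by linarith)
        calc |B r| ≤ ∫ s in r..r₀, |w s| := h1
          _ ≤ (2*β) ^ γ * ((r₀ ^ (-α+1) - r ^ (-α+1)) / (-α+1)) := le_of_le_of_eq h2 h3
          _ ≤ (2*β) ^ γ * (r ^ (-α+1) / (α-1)) :=
              mul_le_mul_of_nonneg_left h4 (Real.rpow_nonneg (by positivity) _)
      have hr1 : r ^ (σ+1) * r ^ (α-γ) * r ^ (-α+1) = 1 := by
        rw [← Real.rpow_add hr0, ← Real.rpow_add hr0,
          show σ+1+(α-γ)+(-α+1) = σ + 2 - γ by ring, hσ2, sub_self, Real.rpow_zero]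
      have hWb : (β + t * r ^ (α-1)) ^ (-γ) ≤ β ^ (-γ) := by
        apply Real.rpow_le_rpow_of_nonpos hβ0 (by nlinarith [mul_pos ht0 hXr]) (by linarith)
      calc r ^ (σ+1) * (μ r * |B r|)
          ≤ r ^ (σ+1) * (μ r * ((2*β) ^ γ * (r ^ (-α+1) / (α-1)))) := by
            apply mul_le_mul_of_nonneg_left _ (Real.rpow_nonneg hr0.le _)
            exact mul_le_mul_of_nonneg_left hBbd (hμpos r hrI).le
        _ = (2*β) ^ γ * (β + t * r ^ (α-1)) ^ (-γ)
              * (r ^ (σ+1) * r ^ (α-γ) * r ^ (-α+1)) / (α-1) := by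
            simp only [hμd]; ring
        _ = (2*β) ^ γ * (β + t * r ^ (α-1)) ^ (-γ) / (α-1) := by
            rw [hr1, mul_one]
        _ ≤ (2*β) ^ γ * β ^ (-γ) / (α-1) := by
            apply (div_le_div_iff_of_pos_right hαm).mpr
            exact mul_le_mul_of_nonneg_left hWb (Real.rpow_nonneg (by positivity) _)
        _ = 2 ^ γ * (1/(α-1)) := by
            rw [Real.mul_rpow (by norm_num) hβ0.le, Real.rpow_neg hβ0.le]
            field_simp [(Real.rpow_pos_of_pos hβ0 γ).ne']
        _ ≤ 2 ^ γ * (1/(α-1) + 1/((α-1)*(γ-1))) := by nlinarith [mul_pos h2γ hd2, mul_pos h2γ hd1]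
    · -- large region : β ≤ t s^(α-1)
      have hs₀lt : s₀ < 1 := by
        by_contra h
        push_neg at h
        have h1 : r₀ = 1 := min_eq_left h
        rw [h1] at hcase
        linarith [hr.2]
      have hr₀pow : r₀ ^ (α-1) = β/t := by
        rw [hr₀d, min_eq_right hs₀lt.le, hs₀pow]
      set e : ℝ := (α-1)*γ - α with hed
      have he1 : e + 1 = (α-1)*(γ-1) := by rw [hed]; ring
      have he1pos : (0:ℝ) < e + 1 := by rw [he1]; exact mul_pos hαm (by linarith)
      have hpt : ∀ s ∈ Icc r₀ r, |w s| ≤ (2*t) ^ γ * s ^ e := by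
        intro s hs
        have hs0 : 0 < s := lt_of_lt_of_le hr₀0 hs.1
        have hs1 : s ≤ 1 := hs.2.trans hr.2
        have hX : 0 < s ^ (α-1) := Real.rpow_pos_of_pos hs0 _
        have hY : β ≤ t * s ^ (α-1) := by
          have h2 : r₀ ^ (α-1) ≤ s ^ (α-1) := Real.rpow_le_rpow hr₀0.le hs.1 (by linarith)
          rw [hr₀pow] at h2
          calc β = t * (β/t) := by field_simp
            _ ≤ t * s ^ (α-1) := mul_le_mul_of_nonneg_left h2 ht0.le
        have hW2 : β + t * s ^ (α-1) ≤ 2*(t * s ^ (α-1)) := by linarith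
        calc |w s| ≤ s ^ (-α) * (β + t * s ^ (α-1)) ^ γ := hwbound s hs0 hs1
          _ ≤ s ^ (-α) * (2*(t * s ^ (α-1))) ^ γ := by
              apply mul_le_mul_of_nonneg_left _ (Real.rpow_nonneg hs0.le _)
              exact Real.rpow_le_rpow (hWpos s hs0).le hW2 hγ0.le
          _ = (2*t) ^ γ * s ^ e := by
              rw [show (2*(t * s ^ (α-1))) = (2*t) * s ^ (α-1) by ring,
                Real.mul_rpow (by positivity) hX.le, ← Real.rpow_mul hs0.le,
                ← mul_assoc, mul_comm (s ^ (-α)) ((2*t) ^ γ), mul_assoc,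
                ← Real.rpow_add hs0, show -α + (α-1)*γ = e by rw [hed]; ring]
      have hBbd : |B r| ≤ (2*t) ^ γ * (r ^ (e+1) / (e+1)) := by
        have h1 : |B r| ≤ ∫ s in r₀..r, |w s| := by
          simp only [hBdef]
          exact intervalIntegral.abs_integral_le_integral_abs hcase.le
        have h2 : ∫ s in r₀..r, |w s| ≤ ∫ s in r₀..r, (2*t) ^ γ * s ^ e := by
          apply intervalIntegral.integral_mono_on hcase.le
          · exact ((hwc.mono (hsubI r₀ r hr₀0 hr0)).abs).intervalIntegrable
          · apply ContinuousOn.intervalIntegrable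
            apply continuousOn_const.mul
            apply ContinuousOn.rpow_const (continuousOn_id.mono (hsubI r₀ r hr₀0 hr0))
            exact fun x hx => Or.inl (ne_of_gt (hsubI r₀ r hr₀0 hr0 hx))
          · exact hpt
        have h3 : ∫ s in r₀..r, (2*t) ^ γ * s ^ e
            = (2*t) ^ γ * ((r ^ (e+1) - r₀ ^ (e+1)) / (e+1)) := by
          rw [intervalIntegral.integral_const_mul, integral_rpow (Or.inl (by linarith))]
        have h4 : (r ^ (e+1) - r₀ ^ (e+1)) / (e+1) ≤ r ^ (e+1) / (e+1) := by
          apply (div_le_div_iff_of_pos_right he1pos).mpr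
          linarith [Real.rpow_nonneg hr₀0.le (e+1)]
        calc |B r| ≤ ∫ s in r₀..r, |w s| := h1
          _ ≤ (2*t) ^ γ * ((r ^ (e+1) - r₀ ^ (e+1)) / (e+1)) := le_of_le_of_eq h2 h3
          _ ≤ (2*t) ^ γ * (r ^ (e+1) / (e+1)) :=
              mul_le_mul_of_nonneg_left h4 (Real.rpow_nonneg (by positivity) _)
      have ht2 : (2*t) ^ γ * (t * r ^ (α-1)) ^ (-γ) = 2 ^ γ * r ^ ((α-1)*(-γ)) := by
        rw [Real.mul_rpow (by norm_num) ht0.le, Real.mul_rpow ht0.le hXr.le,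
          ← Real.rpow_mul hr0.le, Real.rpow_neg ht0.le]
        field_simp [(Real.rpow_pos_of_pos ht0 γ).ne']
      have hr1 : r ^ ((α-1)*(-γ)) * (r ^ (σ+1) * r ^ (α-γ) * r ^ (e+1)) = 1 := by
        rw [← Real.rpow_add hr0, ← Real.rpow_add hr0, ← Real.rpow_add hr0,
          show (α-1)*(-γ) + (σ+1+(α-γ)+(e+1)) = (σ + 2 - γ) + (e + 1 - (α-1)*(γ-1))
            by rw [hed]; ring,
          hσ2, he1, sub_self, sub_self, add_zero, Real.rpow_zero]
      have hWb : (β + t * r ^ (α-1)) ^ (-γ) ≤ (t * r ^ (α-1)) ^ (-γ) := by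
        apply Real.rpow_le_rpow_of_nonpos (mul_pos ht0 hXr) (by linarith) (by linarith)
      calc r ^ (σ+1) * (μ r * |B r|)
          ≤ r ^ (σ+1) * (μ r * ((2*t) ^ γ * (r ^ (e+1) / (e+1)))) := by
            apply mul_le_mul_of_nonneg_left _ (Real.rpow_nonneg hr0.le _)
            exact mul_le_mul_of_nonneg_left hBbd (hμpos r hrI).le
        _ = (2*t) ^ γ * (β + t * r ^ (α-1)) ^ (-γ)
              * (r ^ (σ+1) * r ^ (α-γ) * r ^ (e+1)) / (e+1) := by
            simp only [hμd]; ring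
        _ ≤ (2*t) ^ γ * (t * r ^ (α-1)) ^ (-γ)
              * (r ^ (σ+1) * r ^ (α-γ) * r ^ (e+1)) / (e+1) := by
            apply (div_le_div_iff_of_pos_right he1pos).mpr
            apply mul_le_mul_of_nonneg_right _ (by positivity)
            exact mul_le_mul_of_nonneg_left hWb (Real.rpow_nonneg (by positivity) _)
        _ = 2 ^ γ * (1/((α-1)*(γ-1))) := by
            rw [ht2, mul_assoc, hr1, mul_one, ← he1]
            ring
        _ ≤ 2 ^ γ * (1/(α-1) + 1/((α-1)*(γ-1))) := by nlinarith [mul_pos h2γ hd2, mul_pos h2γ hd1]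
end

section
/- Let 1 < p ≤ 2. Then there exists a constant C = C_p > 0 such that for all x, y ∈ ℝ^N one has 0 ≤ |x+y|^p − |x|^p − p|x|^{p−2}(x·y) ≤ C|y|^p, where the term |x|^{p−2}x is interpreted as 0 when x = 0. -/
set_option maxHeartbeats 1000000


/-- for `1 < p ≤ 2` there is `C = C_p` with
`0 ≤ |x+y|^p - |x|^p - p|x|^{p-2}(x·y) ≤ C|y|^p` for all `x, y ∈ ℝ^N`.
(Note `‖x‖^(p-2) * ⟪x, y⟫ = 0` automatically when `x = 0`, matching the convention
`|x|^{p-2}x := 0` for `x = 0`.) -/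
theorem stmt_10 (p : ℝ) (hp1 : 1 < p) (hp2 : p ≤ 2) :
    ∃ C > (0 : ℝ), ∀ (N : ℕ) (x y : EuclideanSpace ℝ (Fin N)),
      0 ≤ ‖x + y‖ ^ p - ‖x‖ ^ p - p * ‖x‖ ^ (p - 2) * (inner ℝ x y : ℝ) ∧
      ‖x + y‖ ^ p - ‖x‖ ^ p - p * ‖x‖ ^ (p - 2) * (inner ℝ x y : ℝ) ≤ C * ‖y‖ ^ p := by
  have hp0 : (0:ℝ) < p := by linarith
  refine ⟨6, by norm_num, fun N x y => ?_⟩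
  set a : ℝ := ‖x‖ with ha_def
  set b : ℝ := ‖y‖ with hb_def
  set s : ℝ := (inner ℝ x y : ℝ) with hs_def
  have ha0 : 0 ≤ a := norm_nonneg x
  have hb0 : 0 ≤ b := norm_nonneg y
  have hbp0 : 0 ≤ b ^ p := Real.rpow_nonneg hb0 p
  have hcs : |s| ≤ a * b := abs_real_inner_le_norm x y
  have hcs1 : s ≤ a * b := (abs_le.mp hcs).2
  have hcs2 : -(a * b) ≤ s := (abs_le.mp hcs).1
  have hsq : ‖x + y‖ ^ 2 = a ^ 2 + 2 * s + b ^ 2 := norm_add_sq_real x y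
  rcases eq_or_ne x 0 with hx | hx
  · -- x = 0 case
    have : (inner ℝ x y : ℝ) = 0 := by rw [hx]; exact inner_zero_left y
    have ha : a = 0 := by rw [ha_def, hx, norm_zero]
    have hap : a ^ p = 0 := by rw [ha, Real.zero_rpow hp0.ne']
    have hxy : ‖x + y‖ = b := by rw [hx, zero_add]
    rw [hxy, hap, hs_def, this]
    constructor
    · simp only [mul_zero, sub_zero, zero_sub]
      nlinarith [Real.rpow_nonneg hb0 p]
    · nlinarith [Real.rpow_nonneg hb0 p]
  · -- x ≠ 0
    have ha : 0 < a := norm_pos_iff.mpr hx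
    have ha2 : (0:ℝ) < a ^ 2 := by positivity
    have hrp2 : a ^ ((2:ℕ):ℝ) = a ^ 2 := Real.rpow_natCast a 2
    have hbrp2 : ∀ c : ℝ, 0 ≤ c → c ^ ((2:ℕ):ℝ) = c ^ 2 := fun c _ => Real.rpow_natCast c 2
    -- key identity: a^(p-2) = a^p / a^2
    have hkey : a ^ (p - 2) = a ^ p / a ^ 2 := by
      rw [Real.rpow_sub ha, Real.rpow_two]
    have hap0 : 0 ≤ a ^ p := Real.rpow_nonneg ha0 p
    constructor
    · -- lower bound via Bernoulli
      set t : ℝ := s / a ^ 2 with ht_def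
      have hterm : p * a ^ (p - 2) * s = a ^ p * (p * t) := by
        rw [hkey, ht_def]; field_simp
      rcases le_or_gt (-1) t with ht | ht
      · have hB : 1 + p * t ≤ (1 + t) ^ p := one_add_mul_self_le_rpow_one_add ht hp1.le
        have h1t : 0 ≤ 1 + t := by linarith
        have hlow : a * (1 + t) ≤ ‖x + y‖ := by
          have h := real_inner_le_norm x (x + y)
          have hinn : (inner ℝ x (x + y) : ℝ) = a ^ 2 + s := by
            rw [inner_add_right, real_inner_self_eq_norm_sq]
          rw [hinn] at h
          rw [ht_def, ← sub_nonneg]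
          have hrw : ‖x + y‖ - a * (1 + s / a ^ 2) = (a * ‖x + y‖ - (a ^ 2 + s)) / a := by
            field_simp
          rw [hrw]
          exact div_nonneg (by linarith) ha.le
        have h2 : (a * (1 + t)) ^ p ≤ ‖x + y‖ ^ p :=
          Real.rpow_le_rpow (by positivity) hlow hp0.le
        have h3 : (a * (1 + t)) ^ p = a ^ p * (1 + t) ^ p :=
          Real.mul_rpow ha0 h1t
        have h4 : a ^ p * (1 + p * t) ≤ a ^ p * (1 + t) ^ p :=
          mul_le_mul_of_nonneg_left hB hap0
        rw [hterm]
        nlinarith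
      · -- 1 + t < 0 : RHS nonpositive
        have hxy0 : 0 ≤ ‖x + y‖ ^ p := Real.rpow_nonneg (norm_nonneg _) p
        have hpt : p * t ≤ t := by nlinarith
        have : a ^ p * (1 + p * t) ≤ 0 := by
          apply mul_nonpos_of_nonneg_of_nonpos hap0; linarith
        rw [hterm]; linarith
    · -- upper bound
      set r : ℝ := (2 * s + b ^ 2) / a ^ 2 with hr_def
      have hxysq : ‖x + y‖ ^ 2 = a ^ 2 * (1 + r) := by
        rw [hr_def]; field_simp; linarith [hsq]
      have hr1 : -1 ≤ r := by
        nlinarith [sq_nonneg ‖x + y‖, hxysq]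
      have hq1 : 0 ≤ p / 2 := by linarith
      have hq2 : p / 2 ≤ 1 := by linarith
      have hB : (1 + r) ^ (p / 2) ≤ 1 + (p / 2) * r :=
        rpow_one_add_le_one_add_mul_self hr1 hq1 hq2
      have h1r : 0 ≤ 1 + r := by linarith
      have hsplit : ‖x + y‖ ^ p = a ^ p * (1 + r) ^ (p / 2) := by
        have h1 : ‖x + y‖ ^ p = (‖x + y‖ ^ 2) ^ (p / 2) := by
          rw [← Real.rpow_natCast ‖x + y‖ 2, ← Real.rpow_mul (norm_nonneg _)]
          norm_num
          rw [show 2 * (p / 2) = p by ring]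
        have h2 : (a ^ 2) ^ (p / 2) = a ^ p := by
          rw [← hrp2, ← Real.rpow_mul ha0]
          norm_num
          rw [show 2 * (p / 2) = p by ring]
        rw [h1, hxysq, Real.mul_rpow (le_of_lt ha2) h1r, h2]
      have hub : ‖x + y‖ ^ p ≤ a ^ p + p * a ^ (p - 2) * s + (p / 2) * a ^ (p - 2) * b ^ 2 := by
        rw [hsplit]
        have := mul_le_mul_of_nonneg_left hB hap0
        have hexp : a ^ p * (1 + (p / 2) * r) =
            a ^ p + p * a ^ (p - 2) * s + (p / 2) * a ^ (p - 2) * b ^ 2 := by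
          rw [hkey, hr_def]; field_simp; ring
        rw [hexp] at this
        linarith
      rcases le_or_gt b a with hba | hab
      · -- b ≤ a : use the concavity bound
        rcases eq_or_lt_of_le hb0 with hb | hb
        · have hb' : b = 0 := hb.symm
          have hs0 : s = 0 := abs_eq_zero.mp
            (le_antisymm (by nlinarith [hcs]) (abs_nonneg s))
          have hb2 : b ^ 2 = 0 := by rw [hb']; ring
          rw [hb2, mul_zero] at hub
          rw [hb', Real.zero_rpow hp0.ne']
          linarith
        · have hmono : a ^ (p - 2) ≤ b ^ (p - 2) :=
            Real.rpow_le_rpow_of_nonpos hb hba (by linarith)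
          have hbp : b ^ (p - 2) * b ^ 2 = b ^ p := by
            rw [← Real.rpow_natCast b 2, ← Real.rpow_add hb]; norm_num
          have h5 : (p / 2) * a ^ (p - 2) * b ^ 2 ≤ (p / 2) * (b ^ (p - 2) * b ^ 2) := by
            have hb2 : (0:ℝ) ≤ b ^ 2 := sq_nonneg b
            nlinarith [mul_nonneg (mul_nonneg hq1 hb2) (sub_nonneg.mpr hmono)]
          rw [hbp] at h5
          nlinarith [hub]
      · -- a < b : crude bound
        have hxyle : ‖x + y‖ ≤ 2 * b := by
          calc ‖x + y‖ ≤ a + b := norm_add_le x y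
            _ ≤ 2 * b := by linarith
        have h1 : ‖x + y‖ ^ p ≤ (2 * b) ^ p :=
          Real.rpow_le_rpow (norm_nonneg _) hxyle hp0.le
        have h2 : (2 * b) ^ p = 2 ^ p * b ^ p := Real.mul_rpow (by norm_num) hb0
        have h3 : (2:ℝ) ^ p ≤ 4 := by
          calc (2:ℝ) ^ p ≤ 2 ^ (2:ℝ) := Real.rpow_le_rpow_of_exponent_le (by norm_num) hp2
            _ = 4 := by rw [show ((2:ℝ):ℝ) = ((2:ℕ):ℝ) by norm_num, Real.rpow_natCast]; norm_num
        have hap2 : 0 ≤ a ^ (p - 2) := Real.rpow_nonneg ha0 _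
        have h4 : -(p * a ^ (p - 2) * s) ≤ p * a ^ (p - 1) * b := by
          have hs' : -s ≤ a * b := by linarith
          have hmul : a ^ (p - 2) * (-s) ≤ a ^ (p - 2) * (a * b) :=
            mul_le_mul_of_nonneg_left hs' hap2
          have hid : a ^ (p - 2) * a = a ^ (p - 1) := by
            nth_rewrite 2 [← Real.rpow_one a]
            rw [← Real.rpow_add ha, show p - 2 + 1 = p - 1 by ring]
          have hid2 : a ^ (p - 2) * (a * b) = a ^ (p - 1) * b := by rw [← hid]; ring
          rw [hid2] at hmul
          nlinarith [mul_le_mul_of_nonneg_left hmul hp0.le]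
        have h5 : a ^ (p - 1) ≤ b ^ (p - 1) :=
          Real.rpow_le_rpow ha0 hab.le (by linarith)
        have h6 : b ^ (p - 1) * b = b ^ p := by
          nth_rewrite 2 [← Real.rpow_one b]
          rw [← Real.rpow_add (ha.trans hab), show p - 1 + 1 = p by ring]
        have h7 : p * a ^ (p - 1) * b ≤ 2 * b ^ p := by
          have : a ^ (p - 1) * b ≤ b ^ (p - 1) * b := mul_le_mul_of_nonneg_right h5 hb0
          rw [h6] at this
          nlinarith [Real.rpow_nonneg ha0 (p - 1)]
        nlinarith [hbp0]
end

section
/- Let 1 < p ≤ 2. Then there exists a constant C = C_p > 0 such that for all x, y, z ∈ ℝ^N one has | |x+y|^p − p|x|^{p−2}(x·y) − |x+z|^p + p|x|^{p−2}(x·z) | ≤ C ( |y|^{p−1} + |z|^{p−1} ) |y−z|, where the term |x|^{p−2}x is interpreted as 0 when x = 0. -/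
open Real

lemma my_rpow_subadd {x y α : ℝ} (hx : 0 ≤ x) (hy : 0 ≤ y) (h0 : 0 ≤ α) (h1 : α ≤ 1) :
    (x + y) ^ α ≤ x ^ α + y ^ α := by
  have h := NNReal.rpow_add_le_add_rpow x.toNNReal y.toNNReal h0 h1
  have h2 := NNReal.coe_le_coe.2 h
  rw [← Real.toNNReal_add hx hy] at h2
  simpa [NNReal.coe_rpow, Real.coe_toNNReal _ (add_nonneg hx hy),
    Real.coe_toNNReal _ hx, Real.coe_toNNReal _ hy] using h2

lemma my_scalar {α s t d : ℝ} (hα0 : 0 < α) (hα1 : α ≤ 1) (hd : 0 < d) (hds : d < s)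
    (hst : s ≤ t) (htd : t - s ≤ d) :
    s * (s ^ (α - 1) - t ^ (α - 1)) ≤ d ^ α := by
  have hs : 0 < s := hd.trans hds
  have ht : 0 < t := hs.trans_le hst
  have hb : 0 ≤ 1 - α := by linarith
  have hA : 0 < s ^ (1 - α) := Real.rpow_pos_of_pos hs _
  have hB : 0 < t ^ (1 - α) := Real.rpow_pos_of_pos ht _
  have hber : s * (t ^ (1 - α) - s ^ (1 - α)) ≤ (1 - α) * s ^ (1 - α) * (t - s) := by
    have h := rpow_one_add_le_one_add_mul_self (s := (t - s) / s)
      (by have : (0:ℝ) ≤ (t - s) / s := div_nonneg (by linarith) hs.le; linarith) hb (by linarith)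
    have hmul : s ^ (1 - α) * (1 + (t - s) / s) ^ (1 - α) = t ^ (1 - α) := by
      rw [← Real.mul_rpow hs.le (by
        have h0 : (0:ℝ) ≤ (t - s) / s := div_nonneg (by linarith) hs.le
        linarith)]
      congr 1
      field_simp
      ring
    calc s * (t ^ (1 - α) - s ^ (1 - α))
        ≤ s * ((1 - α) * s ^ (1 - α) * ((t - s) / s)) := by
          have hX : t ^ (1 - α) - s ^ (1 - α) ≤ (1 - α) * s ^ (1 - α) * ((t - s) / s) := by
            nlinarith [mul_le_mul_of_nonneg_left h hA.le]
          exact mul_le_mul_of_nonneg_left hX hs.le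
      _ = (1 - α) * s ^ (1 - α) * (t - s) := by
          field_simp
  have hsa : s ^ (α - 1) = (s ^ (1 - α))⁻¹ := by
    rw [show α - 1 = -(1 - α) by ring, Real.rpow_neg hs.le]
  have hta : t ^ (α - 1) = (t ^ (1 - α))⁻¹ := by
    rw [show α - 1 = -(1 - α) by ring, Real.rpow_neg ht.le]
  rw [hsa, hta]
  have heq : s * ((s ^ (1 - α))⁻¹ - (t ^ (1 - α))⁻¹)
      = s * (t ^ (1 - α) - s ^ (1 - α)) / (s ^ (1 - α) * t ^ (1 - α)) := by
    field_simp
  rw [heq, div_le_iff₀ (by positivity)]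
  have hkey : (1 - α) * (t - s) ≤ d ^ α * t ^ (1 - α) := by
    have h1 : d ^ α * d ^ (1 - α) = d := by
      rw [← Real.rpow_add hd]; norm_num
    have h2 : d ^ (1 - α) ≤ t ^ (1 - α) := Real.rpow_le_rpow hd.le (by linarith) hb
    nlinarith [Real.rpow_nonneg hd.le α]
  nlinarith [mul_le_mul_of_nonneg_left hkey hA.le]

lemma my_norm_smul_rpow {E : Type*} [NormedAddCommGroup E] [NormedSpace ℝ E] {α : ℝ}
    (hα0 : 0 < α) (c : E) : ‖(‖c‖ ^ (α - 1)) • c‖ = ‖c‖ ^ α := by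
  rcases eq_or_ne c 0 with rfl | hc
  · simp [Real.zero_rpow hα0.ne']
  · have hc' : ‖c‖ ≠ 0 := norm_ne_zero_iff.mpr hc
    rw [norm_smul, Real.norm_eq_abs, abs_of_nonneg (Real.rpow_nonneg (norm_nonneg c) _),
      ← Real.rpow_add_one hc' (α - 1), sub_add_cancel]

lemma my_vec_aux {E : Type*} [NormedAddCommGroup E] [NormedSpace ℝ E] {α : ℝ}
    (hα0 : 0 < α) (hα1 : α ≤ 1) (a b : E) (hab : ‖b‖ ≤ ‖a‖) :
    ‖(‖a‖ ^ (α - 1)) • a - (‖b‖ ^ (α - 1)) • b‖ ≤ 4 * ‖a - b‖ ^ α := by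
  rcases eq_or_ne a b with rfl | hne
  · simp [Real.zero_rpow hα0.ne']
  have hd : 0 < ‖a - b‖ := by rwa [norm_pos_iff, sub_ne_zero]
  have hdα : 0 ≤ ‖a - b‖ ^ α := Real.rpow_nonneg (norm_nonneg _) _
  have htri : ‖a‖ ≤ ‖b‖ + ‖a - b‖ := by
    calc ‖a‖ = ‖b + (a - b)‖ := congrArg norm (by abel)
    _ ≤ ‖b‖ + ‖a - b‖ := norm_add_le _ _
  by_cases hcase : ‖b‖ ≤ ‖a - b‖
  · have h1 : ‖(‖a‖ ^ (α - 1)) • a - (‖b‖ ^ (α - 1)) • b‖ ≤ ‖a‖ ^ α + ‖b‖ ^ α := by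
      calc ‖(‖a‖ ^ (α - 1)) • a - (‖b‖ ^ (α - 1)) • b‖
          ≤ ‖(‖a‖ ^ (α - 1)) • a‖ + ‖(‖b‖ ^ (α - 1)) • b‖ := norm_sub_le _ _
        _ = ‖a‖ ^ α + ‖b‖ ^ α := by rw [my_norm_smul_rpow hα0, my_norm_smul_rpow hα0]
    have h2 : ‖a‖ ^ α ≤ (‖b‖ + ‖a - b‖) ^ α := Real.rpow_le_rpow (norm_nonneg a) htri hα0.le
    have h3 : (‖b‖ + ‖a - b‖) ^ α ≤ ‖b‖ ^ α + ‖a - b‖ ^ α :=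
      my_rpow_subadd (norm_nonneg b) (norm_nonneg _) hα0.le hα1
    have h4 : ‖b‖ ^ α ≤ ‖a - b‖ ^ α := Real.rpow_le_rpow (norm_nonneg b) hcase hα0.le
    linarith
  · push_neg at hcase
    have hb0 : 0 < ‖b‖ := hd.trans hcase
    have hmono : ‖a‖ ^ (α - 1) ≤ ‖b‖ ^ (α - 1) :=
      Real.rpow_le_rpow_of_nonpos hb0 hab (by linarith)
    have hdec : (‖a‖ ^ (α - 1)) • a - (‖b‖ ^ (α - 1)) • b
        = (‖a‖ ^ (α - 1)) • (a - b) + (‖a‖ ^ (α - 1) - ‖b‖ ^ (α - 1)) • b := by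
      rw [smul_sub, sub_smul]; abel
    rw [hdec]
    have hterm1 : ‖(‖a‖ ^ (α - 1)) • (a - b)‖ ≤ ‖a - b‖ ^ α := by
      rw [norm_smul, Real.norm_eq_abs, abs_of_nonneg (Real.rpow_nonneg (norm_nonneg a) _)]
      calc ‖a‖ ^ (α - 1) * ‖a - b‖ ≤ ‖a - b‖ ^ (α - 1) * ‖a - b‖ := by
            apply mul_le_mul_of_nonneg_right _ hd.le
            exact Real.rpow_le_rpow_of_nonpos hd (le_trans hcase.le hab) (by linarith)
        _ = ‖a - b‖ ^ α := by rw [← Real.rpow_add_one hd.ne' (α - 1), sub_add_cancel]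
    have hterm2 : ‖(‖a‖ ^ (α - 1) - ‖b‖ ^ (α - 1)) • b‖ ≤ ‖a - b‖ ^ α := by
      rw [norm_smul, Real.norm_eq_abs, abs_of_nonpos (by linarith)]
      calc -(‖a‖ ^ (α - 1) - ‖b‖ ^ (α - 1)) * ‖b‖
          = ‖b‖ * (‖b‖ ^ (α - 1) - ‖a‖ ^ (α - 1)) := by ring
        _ ≤ ‖a - b‖ ^ α := my_scalar hα0 hα1 hd hcase hab (by linarith)
    calc ‖(‖a‖ ^ (α - 1)) • (a - b) + (‖a‖ ^ (α - 1) - ‖b‖ ^ (α - 1)) • b‖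
        ≤ ‖(‖a‖ ^ (α - 1)) • (a - b)‖ + ‖(‖a‖ ^ (α - 1) - ‖b‖ ^ (α - 1)) • b‖ := norm_add_le _ _
      _ ≤ 4 * ‖a - b‖ ^ α := by linarith

lemma my_vec {E : Type*} [NormedAddCommGroup E] [NormedSpace ℝ E] {α : ℝ}
    (hα0 : 0 < α) (hα1 : α ≤ 1) (a b : E) :
    ‖(‖a‖ ^ (α - 1)) • a - (‖b‖ ^ (α - 1)) • b‖ ≤ 4 * ‖a - b‖ ^ α := by
  rcases le_total ‖b‖ ‖a‖ with h | h
  · exact my_vec_aux hα0 hα1 a b h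
  · rw [norm_sub_rev, norm_sub_rev a b]
    exact my_vec_aux hα0 hα1 b a h

/-- for `1 < p ≤ 2` there is `C = C_p` with
`| |x+y|^p - p|x|^{p-2}(x·y) - |x+z|^p + p|x|^{p-2}(x·z) | ≤ C(|y|^{p-1} + |z|^{p-1})|y-z|`
for all `x, y, z ∈ ℝ^N`. (Note `‖x‖^(p-2) * ⟪x, ·⟫ = 0` automatically when `x = 0`,
matching the convention `|x|^{p-2}x := 0` for `x = 0`.) -/
theorem stmt_11 (p : ℝ) (hp1 : 1 < p) (hp2 : p ≤ 2) :
    ∃ C > (0 : ℝ), ∀ (N : ℕ) (x y z : EuclideanSpace ℝ (Fin N)),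
      |‖x + y‖ ^ p - p * ‖x‖ ^ (p - 2) * (inner ℝ x y : ℝ)
        - ‖x + z‖ ^ p + p * ‖x‖ ^ (p - 2) * (inner ℝ x z : ℝ)| ≤
        C * (‖y‖ ^ (p - 1) + ‖z‖ ^ (p - 1)) * ‖y - z‖ := by
  refine ⟨4 * p, by linarith, ?_⟩
  intro N x y z
  have hα0 : 0 < p - 1 := by linarith
  have hα1 : p - 1 ≤ 1 := by linarith
  set f : EuclideanSpace ℝ (Fin N) → ℝ := fun w => ‖x + w‖ ^ p - p * ‖x‖ ^ (p - 2) * (inner ℝ x w : ℝ) with hf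
  set f' : EuclideanSpace ℝ (Fin N) → (EuclideanSpace ℝ (Fin N) →L[ℝ] ℝ) := fun w =>
    p • (innerSL ℝ ((‖x + w‖ ^ (p - 2)) • (x + w) - (‖x‖ ^ (p - 2)) • x)) with hf'
  have hderiv : ∀ w : EuclideanSpace ℝ (Fin N), HasFDerivAt f (f' w) w := by
    intro w
    have h1 : HasFDerivAt (fun w : EuclideanSpace ℝ (Fin N) => ‖x + w‖ ^ p)
        ((p * ‖x + w‖ ^ (p - 2)) • innerSL ℝ (x + w)) w := by
      have hid : HasFDerivAt (fun w : EuclideanSpace ℝ (Fin N) => x + w) (ContinuousLinearMap.id ℝ _) w :=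
        (hasFDerivAt_id w).const_add x
      have := (hasFDerivAt_norm_rpow (x + w) hp1).comp w hid
      simp only [ContinuousLinearMap.comp_id] at this
      exact this
    have h2 : HasFDerivAt (fun w : EuclideanSpace ℝ (Fin N) => p * ‖x‖ ^ (p - 2) * (inner ℝ x w : ℝ))
        ((p * ‖x‖ ^ (p - 2)) • innerSL ℝ x) w := by
      simpa using ((innerSL ℝ x).hasFDerivAt (x := w)).const_mul (p * ‖x‖ ^ (p - 2))
    have h3 := h1.sub h2
    refine h3.congr_fderiv ?_
    simp only [hf']
    rw [map_sub, map_smul, map_smul, smul_sub, smul_smul, smul_smul]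
  have hbound : ∀ w ∈ segment ℝ z y,
      ‖f' w‖ ≤ 4 * p * (‖y‖ ^ (p - 1) + ‖z‖ ^ (p - 1)) := by
    intro w hw
    have hwn : ‖w‖ ≤ ‖y‖ + ‖z‖ := by
      obtain ⟨t1, t2, ht1, ht2, hsum, rfl⟩ := hw
      calc ‖t1 • z + t2 • y‖ ≤ ‖t1 • z‖ + ‖t2 • y‖ := norm_add_le _ _
        _ = t1 * ‖z‖ + t2 * ‖y‖ := by
            rw [norm_smul, norm_smul, Real.norm_eq_abs, Real.norm_eq_abs,
              abs_of_nonneg ht1, abs_of_nonneg ht2]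
        _ ≤ ‖y‖ + ‖z‖ := by nlinarith [norm_nonneg y, norm_nonneg z]
    have hkey : ‖(‖x + w‖ ^ (p - 2)) • (x + w) - (‖x‖ ^ (p - 2)) • x‖
        ≤ 4 * ‖w‖ ^ (p - 1) := by
      have := my_vec (E := EuclideanSpace ℝ (Fin N)) (α := p - 1) hα0 hα1 (x + w) x
      simpa [show p - 1 - 1 = p - 2 by ring, add_sub_cancel_left] using this
    have hw2 : ‖w‖ ^ (p - 1) ≤ ‖y‖ ^ (p - 1) + ‖z‖ ^ (p - 1) := by
      calc ‖w‖ ^ (p - 1) ≤ (‖y‖ + ‖z‖) ^ (p - 1) :=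
            Real.rpow_le_rpow (norm_nonneg w) hwn hα0.le
        _ ≤ ‖y‖ ^ (p - 1) + ‖z‖ ^ (p - 1) :=
            my_rpow_subadd (norm_nonneg y) (norm_nonneg z) hα0.le hα1
    simp only [hf']
    rw [norm_smul p ((innerSL ℝ) (‖x + w‖ ^ (p - 2) • (x + w) - ‖x‖ ^ (p - 2) • x)),
      Real.norm_eq_abs, abs_of_pos (by linarith), innerSL_apply_norm]
    calc p * ‖(‖x + w‖ ^ (p - 2)) • (x + w) - (‖x‖ ^ (p - 2)) • x‖
        ≤ p * (4 * ‖w‖ ^ (p - 1)) := by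
          exact mul_le_mul_of_nonneg_left hkey (by linarith)
      _ ≤ 4 * p * (‖y‖ ^ (p - 1) + ‖z‖ ^ (p - 1)) := by nlinarith
  have hMVT := (convex_segment z y).norm_image_sub_le_of_norm_hasFDerivWithin_le
    (fun w _ => (hderiv w).hasFDerivWithinAt) hbound
    (left_mem_segment ℝ z y) (right_mem_segment ℝ z y)
  have heq : f y - f z = ‖x + y‖ ^ p - p * ‖x‖ ^ (p - 2) * (inner ℝ x y : ℝ)
      - ‖x + z‖ ^ p + p * ‖x‖ ^ (p - 2) * (inner ℝ x z : ℝ) := by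
    rw [hf]; ring
  rw [← heq, ← Real.norm_eq_abs]
  calc ‖f y - f z‖ ≤ 4 * p * (‖y‖ ^ (p - 1) + ‖z‖ ^ (p - 1)) * ‖y - z‖ := hMVT
    _ = 4 * p * (‖y‖ ^ (p - 1) + ‖z‖ ^ (p - 1)) * ‖y - z‖ := rfl
end

section
/- Let N ≥ 3 be an integer, N/(N−1) < p < 2, α := (p−1)(N−1), β := (p−1)/(α−1), σ := (2−p)/(p−1), and for t > 0 let u_t(x) := ∫_{|x|}^1 (β y + t y^α)^{−1/(p−1)} dy on B_1 \ {0}. Let g be a nonnegative continuous function on closure(B_1). Then there exists C > 0 such that for all 0 < R < 1, 0 < δ < 1, t > 1, and every continuously differentiable function φ on B_1 \ {0} with sup_{x∈B_1} ( |x|^σ|φ(x)| + |x|^{σ+1}|∇φ(x)| ) ≤ R, one has sup_{x∈B_1} |x|^{σ+2} g(x) |∇u_t(x) + ∇φ(x)|^p ≤ C ( R^p + sup_{|z|≤δ} g(z) + t^{−p/(p−1)} δ^{−((N−1)p − σ − 2)} ). -/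
open Metric Filter Set
open scoped Topology

lemma aux_grad_norm_comp {E : Type*} [NormedAddCommGroup E] [InnerProductSpace ℝ E]
    [CompleteSpace E] (F : ℝ → ℝ) (f' : ℝ) (x : E) (hx : x ≠ 0)
    (hF : HasDerivAt F f' ‖x‖) :
    HasGradientAt (fun y => F ‖y‖) ((f' * ‖x‖⁻¹) • x) x := by
  have hx0 : (0:ℝ) < ‖x‖ := norm_pos_iff.mpr hx
  have hsq : HasFDerivAt (fun y : E => (‖y‖^2 : ℝ)) ((2:ℕ) • innerSL ℝ x) x :=
    (hasStrictFDerivAt_norm_sq x).hasFDerivAt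
  have hkey : ((‖x‖:ℝ)^2) ^ ((1:ℝ)/2 - 1) = ‖x‖⁻¹ := by
    rw [← Real.rpow_natCast ‖x‖ 2, ← Real.rpow_mul (norm_nonneg x)]
    norm_num
    rw [Real.rpow_neg_one]
  have hnorm : HasFDerivAt (fun y : E => ‖y‖) (‖x‖⁻¹ • innerSL ℝ x) x := by
    have h2 := hsq.rpow_const (p := (1:ℝ)/2) (Or.inl (by positivity))
    have heq : (fun y : E => ((‖y‖^2 : ℝ)) ^ ((1:ℝ)/2)) = fun y : E => ‖y‖ := by
      funext y
      rw [← Real.rpow_natCast ‖y‖ 2, ← Real.rpow_mul (norm_nonneg y)]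
      norm_num
    rw [heq] at h2
    convert h2 using 1
    ext y
    simp only [ContinuousLinearMap.smul_apply, hkey, smul_eq_mul,
      ← Nat.cast_smul_eq_nsmul ℝ]
    ring
  have hcomp := hF.comp_hasFDerivAt x hnorm
  rw [hasGradientAt_iff_hasFDerivAt]
  convert hcomp using 1
  rfl
  rfl
  ext y
  simp only [InnerProductSpace.toDual_apply_apply, ContinuousLinearMap.smul_apply,
    innerSL_apply_apply, real_inner_smul_left, smul_eq_mul]
  ring

set_option maxHeartbeats 1000000 in
/-- "Into", part 1: weighted bound on `g|∇u_t + ∇φ|^p` for `φ` in the ball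
of radius `R` of the weighted space `X`. -/
theorem stmt_13 (N : ℕ) (hN : 3 ≤ N) (p : ℝ)
    (hp1 : (N : ℝ) / ((N : ℝ) - 1) < p) (hp2 : p < 2)
    (α β σ : ℝ) (hα : α = (p - 1) * ((N : ℝ) - 1)) (hβ : β = (p - 1) / (α - 1))
    (hσ : σ = (2 - p) / (p - 1))
    (u : ℝ → EuclideanSpace ℝ (Fin N) → ℝ)
    (hu : ∀ (t : ℝ) (x : EuclideanSpace ℝ (Fin N)),
      u t x = ∫ y in (‖x‖)..(1 : ℝ), (β * y + t * y ^ α) ^ (-(1 / (p - 1))))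
    (g : EuclideanSpace ℝ (Fin N) → ℝ)
    (hg_nonneg : ∀ x ∈ closedBall (0 : EuclideanSpace ℝ (Fin N)) 1, 0 ≤ g x)
    (hg_cont : ContinuousOn g (closedBall (0 : EuclideanSpace ℝ (Fin N)) 1)) :
    ∃ C > (0 : ℝ), ∀ R δ t : ℝ, 0 < R → R < 1 → 0 < δ → δ < 1 → 1 < t →
      ∀ φ : EuclideanSpace ℝ (Fin N) → ℝ,
        ContDiffOn ℝ 1 φ (ball (0 : EuclideanSpace ℝ (Fin N)) 1 \ {0}) →
        (∀ x ∈ ball (0 : EuclideanSpace ℝ (Fin N)) 1 \ {0},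
          ‖x‖ ^ σ * |φ x| + ‖x‖ ^ (σ + 1) * ‖gradient φ x‖ ≤ R) →
        ∀ x ∈ ball (0 : EuclideanSpace ℝ (Fin N)) 1 \ {0},
          ‖x‖ ^ (σ + 2) * g x * ‖gradient (u t) x + gradient φ x‖ ^ p ≤
            C * (R ^ p + sSup (g '' closedBall (0 : EuclideanSpace ℝ (Fin N)) δ)
              + t ^ (-(p / (p - 1))) * δ ^ (-(((N : ℝ) - 1) * p - σ - 2))) := by
  -- basic numeric facts
  have hN3 : (3:ℝ) ≤ (N:ℝ) := by exact_mod_cast hN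
  have hN1 : (0:ℝ) < (N:ℝ) - 1 := by linarith
  have hp1' : (1:ℝ) < p := by
    have h1 : (1:ℝ) < (N:ℝ) / ((N:ℝ) - 1) := (one_lt_div hN1).mpr (by linarith)
    linarith
  have hpm : (0:ℝ) < p - 1 := by linarith
  have hNp : (N:ℝ) < p * ((N:ℝ) - 1) := (div_lt_iff₀ hN1).mp hp1
  have hα1 : (1:ℝ) < α := by
    rw [hα]
    have hring : p * ((N:ℝ) - 1) - ((N:ℝ) - 1) = (p - 1) * ((N:ℝ) - 1) := by ring
    linarith
  have hβ0 : (0:ℝ) < β := by rw [hβ]; exact div_pos hpm (by linarith)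
  have hσ2 : σ + 2 = p / (p - 1) := by rw [hσ]; field_simp; ring
  have hκ : (0:ℝ) < ((N:ℝ) - 1) * p - σ - 2 := by
    have heq : ((N:ℝ) - 1) * p - σ - 2 = (((N:ℝ) - 1) * (p - 1) - 1) * p / (p - 1) := by
      rw [hσ]; field_simp; ring
    rw [heq]
    apply div_pos _ hpm
    apply mul_pos _ (by linarith)
    have : (1:ℝ) < ((N:ℝ) - 1) * (p - 1) := by rw [hα, mul_comm] at hα1; exact hα1
    linarith
  -- bound on g
  obtain ⟨M0, hM0⟩ := (isCompact_closedBall (0 : EuclideanSpace ℝ (Fin N)) 1).exists_bound_of_continuousOn hg_cont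
  set M : ℝ := max M0 0 with hMdef
  have hM0' : (0:ℝ) ≤ M := le_max_right _ _
  have hgM : ∀ z ∈ closedBall (0 : EuclideanSpace ℝ (Fin N)) 1, g z ≤ M := by
    intro z hz
    calc g z ≤ |g z| := le_abs_self _
      _ = ‖g z‖ := (Real.norm_eq_abs _).symm
      _ ≤ M0 := hM0 z hz
      _ ≤ M := le_max_left _ _
  set β' : ℝ := β ^ (-(p / (p - 1))) with hβ'def
  have hβ'0 : (0:ℝ) < β' := Real.rpow_pos_of_pos hβ0 _
  have h2p : (0:ℝ) < (2:ℝ) ^ p := Real.rpow_pos_of_pos (by norm_num) _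
  refine ⟨(2:ℝ) ^ p * (M + β') + 1, by positivity, ?_⟩
  intro R δ t hR0 hR1 hδ0 hδ1 ht φ hφ hφbd x hxmem
  obtain ⟨hxball, hxne⟩ := hxmem
  have hx : x ≠ 0 := by simpa using hxne
  have hr0 : (0:ℝ) < ‖x‖ := norm_pos_iff.mpr hx
  have hr1 : ‖x‖ < 1 := mem_ball_zero_iff.mp hxball
  have ht0 : (0:ℝ) < t := by linarith
  set r : ℝ := ‖x‖ with hrdef
  -- the integrand
  set f : ℝ → ℝ := fun y => (β * y + t * y ^ α) ^ (-(1 / (p - 1))) with hfdef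
  have hcontAt : ∀ y ∈ Ioi (0:ℝ), ContinuousAt f y := by
    intro y hy
    have hy0 : (0:ℝ) < y := hy
    have hb : ContinuousAt (fun y : ℝ => β * y + t * y ^ α) y :=
      (continuousAt_const.mul continuousAt_id).add
        (continuousAt_const.mul (Real.continuousAt_rpow_const y α (Or.inl hy0.ne')))
    exact hb.rpow_const (Or.inl (by positivity))
  have hint : IntervalIntegrable f MeasureTheory.volume r 1 := by
    apply ContinuousOn.intervalIntegrable
    intro y hy
    have hy0 : (0:ℝ) < y := lt_of_lt_of_le (lt_min hr0 one_pos) hy.1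
    exact (hcontAt y hy0).continuousWithinAt
  have hmeas := ContinuousAt.stronglyMeasurableAtFilter (μ := MeasureTheory.volume)
    isOpen_Ioi hcontAt r hr0
  have hF : HasDerivAt (fun s => ∫ y in s..(1:ℝ), f y) (-(f r)) r :=
    intervalIntegral.integral_hasDerivAt_left hint hmeas (hcontAt r hr0)
  have hu' : u t = fun y : EuclideanSpace ℝ (Fin N) => ∫ s in (‖y‖)..(1:ℝ), f s :=
    funext fun y => hu t y
  have hgrad : HasGradientAt (u t) ((-(f r) * r⁻¹) • x) x := by
    rw [hu']
    exact aux_grad_norm_comp (fun s => ∫ y in s..(1:ℝ), f y) (-(f r)) x hx hF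
  have hbase : (0:ℝ) < β * r + t * r ^ α := by positivity
  have hf0 : (0:ℝ) < f r := Real.rpow_pos_of_pos hbase _
  have hgradnorm : ‖gradient (u t) x‖ = f r := by
    rw [hgrad.gradient, norm_smul, Real.norm_eq_abs, abs_mul, abs_neg,
      abs_of_pos hf0, abs_of_pos (inv_pos.mpr hr0), ← hrdef]
    field_simp
  -- notation for the two pieces
  set A : ℝ := f r with hAdef
  set B : ℝ := ‖gradient φ x‖ with hBdef
  have hB0 : (0:ℝ) ≤ B := norm_nonneg _
  have hA0 : (0:ℝ) < A := hf0
  set S : ℝ := sSup (g '' closedBall (0 : EuclideanSpace ℝ (Fin N)) δ) with hSdef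
  set T : ℝ := t ^ (-(p / (p - 1))) * δ ^ (-(((N:ℝ) - 1) * p - σ - 2)) with hTdef
  -- facts about S, T
  have hsub : closedBall (0 : EuclideanSpace ℝ (Fin N)) δ ⊆
      closedBall (0 : EuclideanSpace ℝ (Fin N)) 1 := closedBall_subset_closedBall hδ1.le
  have hbdd : BddAbove (g '' closedBall (0 : EuclideanSpace ℝ (Fin N)) δ) := by
    refine ⟨M, ?_⟩
    rintro y ⟨z, hz, rfl⟩
    exact hgM z (hsub hz)
  have hS0 : (0:ℝ) ≤ S := by
    have h0mem : (0 : EuclideanSpace ℝ (Fin N)) ∈ closedBall (0 : EuclideanSpace ℝ (Fin N)) δ := by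
      simp [hδ0.le]
    exact le_trans (hg_nonneg 0 (by simp)) (le_csSup hbdd ⟨0, h0mem, rfl⟩)
  have hT0 : (0:ℝ) ≤ T := by
    apply mul_nonneg (Real.rpow_nonneg ht0.le _) (Real.rpow_nonneg hδ0.le _)
  have hRp0 : (0:ℝ) ≤ R ^ p := Real.rpow_nonneg hR0.le _
  have hgx0 : (0:ℝ) ≤ g x := hg_nonneg x (ball_subset_closedBall hxball)
  have hgxM : g x ≤ M := hgM x (ball_subset_closedBall hxball)
  -- A^p as rpow of the base
  have hApow : A ^ p = (β * r + t * r ^ α) ^ (-(p / (p - 1))) := by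
    rw [hAdef, hfdef]
    rw [← Real.rpow_mul hbase.le]
    congr 1
    ring
  -- the A-term estimate, by cases
  have hAcase : g x * (r ^ (σ + 2) * A ^ p) ≤ M * T + β' * S := by
    rcases le_total r δ with hc | hc
    · -- small r : use β r lower bound
      have h1 : A ^ p ≤ (β * r) ^ (-(p / (p - 1))) := by
        rw [hApow]
        apply Real.rpow_le_rpow_of_nonpos (by positivity)
          (le_add_of_nonneg_right (by positivity))
        apply neg_nonpos.mpr
        positivity
      have h2 : (β * r) ^ (-(p / (p - 1))) = β' * r ^ (-(p / (p - 1))) := by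
        rw [Real.mul_rpow hβ0.le hr0.le]
      have h3 : r ^ (σ + 2) * A ^ p ≤ β' := by
        calc r ^ (σ + 2) * A ^ p ≤ r ^ (σ + 2) * (β' * r ^ (-(p / (p - 1)))) := by
              rw [← h2]
              exact mul_le_mul_of_nonneg_left h1 (Real.rpow_nonneg hr0.le _)
          _ = β' * (r ^ (σ + 2) * r ^ (-(p / (p - 1)))) := by ring
          _ = β' := by
              rw [← Real.rpow_add hr0, hσ2]
              norm_num
      have hgxS : g x ≤ S := by
        apply le_csSup hbdd
        exact ⟨x, by simpa [mem_closedBall_zero_iff] using hc, rfl⟩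
      have : g x * (r ^ (σ + 2) * A ^ p) ≤ S * β' :=
        mul_le_mul hgxS h3 (by positivity) hS0
      linarith [mul_nonneg hM0' hT0]
    · -- large r : use t r^α lower bound
      have h1 : A ^ p ≤ (t * r ^ α) ^ (-(p / (p - 1))) := by
        rw [hApow]
        apply Real.rpow_le_rpow_of_nonpos (by positivity)
          (le_add_of_nonneg_left (by positivity))
        apply neg_nonpos.mpr
        positivity
      have h2 : (t * r ^ α) ^ (-(p / (p - 1))) =
          t ^ (-(p / (p - 1))) * r ^ (α * (-(p / (p - 1)))) := by
        rw [Real.mul_rpow ht0.le (Real.rpow_nonneg hr0.le _), ← Real.rpow_mul hr0.le]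
      have hexp : σ + 2 + α * (-(p / (p - 1))) = -(((N:ℝ) - 1) * p - σ - 2) := by
        rw [hσ, hα]; field_simp; ring
      have h3 : r ^ (σ + 2) * A ^ p ≤ T := by
        calc r ^ (σ + 2) * A ^ p
            ≤ r ^ (σ + 2) * (t ^ (-(p / (p - 1))) * r ^ (α * (-(p / (p - 1))))) := by
              rw [← h2]
              exact mul_le_mul_of_nonneg_left h1 (Real.rpow_nonneg hr0.le _)
          _ = t ^ (-(p / (p - 1))) * (r ^ (σ + 2) * r ^ (α * (-(p / (p - 1))))) := by ring
          _ = t ^ (-(p / (p - 1))) * r ^ (-(((N:ℝ) - 1) * p - σ - 2)) := by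
              rw [← Real.rpow_add hr0, hexp]
          _ ≤ t ^ (-(p / (p - 1))) * δ ^ (-(((N:ℝ) - 1) * p - σ - 2)) := by
              apply mul_le_mul_of_nonneg_left _ (Real.rpow_nonneg ht0.le _)
              exact Real.rpow_le_rpow_of_nonpos hδ0 hc (neg_nonpos.mpr hκ.le)
      have : g x * (r ^ (σ + 2) * A ^ p) ≤ M * T :=
        mul_le_mul hgxM h3 (by positivity) hM0'
      linarith [mul_nonneg hβ'0.le hS0]
  -- the B-term estimate
  have hBbd : r ^ (σ + 1) * B ≤ R := by
    have h := hφbd x ⟨hxball, hxne⟩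
    have h0 : (0:ℝ) ≤ ‖x‖ ^ σ * |φ x| := by positivity
    rw [hrdef, hBdef]
    linarith
  have hBle : B ≤ R * r ^ (-(σ + 1)) := by
    have hrp : (0:ℝ) < r ^ (σ + 1) := Real.rpow_pos_of_pos hr0 _
    rw [Real.rpow_neg hr0.le, ← div_eq_mul_inv, le_div_iff₀ hrp, mul_comm]
    exact hBbd
  have hBcase : g x * (r ^ (σ + 2) * B ^ p) ≤ M * R ^ p := by
    have h1 : B ^ p ≤ R ^ p * r ^ (-(σ + 1) * p) := by
      calc B ^ p ≤ (R * r ^ (-(σ + 1))) ^ p :=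
            Real.rpow_le_rpow hB0 hBle (by linarith)
        _ = R ^ p * r ^ (-(σ + 1) * p) := by
            rw [Real.mul_rpow hR0.le (Real.rpow_nonneg hr0.le _), ← Real.rpow_mul hr0.le]
    have hexp : σ + 2 + -(σ + 1) * p = 0 := by
      have : (σ + 1) * p = σ + 2 := by rw [hσ]; field_simp; ring
      linarith [this]
    have h3 : r ^ (σ + 2) * B ^ p ≤ R ^ p := by
      calc r ^ (σ + 2) * B ^ p ≤ r ^ (σ + 2) * (R ^ p * r ^ (-(σ + 1) * p)) :=
            mul_le_mul_of_nonneg_left h1 (Real.rpow_nonneg hr0.le _)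
        _ = R ^ p * (r ^ (σ + 2) * r ^ (-(σ + 1) * p)) := by ring
        _ = R ^ p := by rw [← Real.rpow_add hr0, hexp, Real.rpow_zero, mul_one]
    exact mul_le_mul hgxM h3 (by positivity) hM0'
  -- the sum bound
  have hGsum : ‖gradient (u t) x + gradient φ x‖ ≤ A + B := by
    calc ‖gradient (u t) x + gradient φ x‖ ≤ ‖gradient (u t) x‖ + ‖gradient φ x‖ :=
          norm_add_le _ _
      _ = A + B := by rw [hgradnorm]
  have hGp : ‖gradient (u t) x + gradient φ x‖ ^ p ≤ (2:ℝ) ^ p * (A ^ p + B ^ p) := by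
    have hp0 : (0:ℝ) ≤ p := by linarith
    rcases le_total A B with hab | hab
    · calc ‖gradient (u t) x + gradient φ x‖ ^ p ≤ (2 * B) ^ p :=
            Real.rpow_le_rpow (norm_nonneg _) (by linarith) hp0
        _ = (2:ℝ) ^ p * B ^ p := Real.mul_rpow (by norm_num) hB0
        _ ≤ (2:ℝ) ^ p * (A ^ p + B ^ p) := by
            apply mul_le_mul_of_nonneg_left _ h2p.le
            linarith [Real.rpow_nonneg hA0.le p]
    · calc ‖gradient (u t) x + gradient φ x‖ ^ p ≤ (2 * A) ^ p :=
            Real.rpow_le_rpow (norm_nonneg _) (by linarith) hp0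
        _ = (2:ℝ) ^ p * A ^ p := Real.mul_rpow (by norm_num) hA0.le
        _ ≤ (2:ℝ) ^ p * (A ^ p + B ^ p) := by
            apply mul_le_mul_of_nonneg_left _ h2p.le
            linarith [Real.rpow_nonneg hB0 p]
  -- assemble
  have hmain : r ^ (σ + 2) * g x * ‖gradient (u t) x + gradient φ x‖ ^ p ≤
      (2:ℝ) ^ p * (g x * (r ^ (σ + 2) * A ^ p)) + (2:ℝ) ^ p * (g x * (r ^ (σ + 2) * B ^ p)) := by
    calc r ^ (σ + 2) * g x * ‖gradient (u t) x + gradient φ x‖ ^ p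
        ≤ r ^ (σ + 2) * g x * ((2:ℝ) ^ p * (A ^ p + B ^ p)) := by
          apply mul_le_mul_of_nonneg_left hGp
          positivity
      _ = (2:ℝ) ^ p * (g x * (r ^ (σ + 2) * A ^ p)) +
          (2:ℝ) ^ p * (g x * (r ^ (σ + 2) * B ^ p)) := by ring
  have hfin1 : (2:ℝ) ^ p * (g x * (r ^ (σ + 2) * A ^ p)) ≤ (2:ℝ) ^ p * (M * T + β' * S) :=
    mul_le_mul_of_nonneg_left hAcase h2p.le
  have hfin2 : (2:ℝ) ^ p * (g x * (r ^ (σ + 2) * B ^ p)) ≤ (2:ℝ) ^ p * (M * R ^ p) :=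
    mul_le_mul_of_nonneg_left hBcase h2p.le
  set C : ℝ := (2:ℝ) ^ p * (M + β') + 1 with hCdef
  have hCR : (2:ℝ) ^ p * M * R ^ p ≤ C * R ^ p := by
    apply mul_le_mul_of_nonneg_right _ hRp0
    linarith [hCdef, mul_nonneg h2p.le hβ'0.le, mul_add ((2:ℝ)^p) M β']
  have hCS : (2:ℝ) ^ p * β' * S ≤ C * S := by
    apply mul_le_mul_of_nonneg_right _ hS0
    linarith [hCdef, mul_nonneg h2p.le hM0', mul_add ((2:ℝ)^p) M β']
  have hCT : (2:ℝ) ^ p * M * T ≤ C * T := by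
    apply mul_le_mul_of_nonneg_right _ hT0
    linarith [hCdef, mul_nonneg h2p.le hβ'0.le, mul_add ((2:ℝ)^p) M β']
  calc r ^ (σ + 2) * g x * ‖gradient (u t) x + gradient φ x‖ ^ p
      ≤ (2:ℝ) ^ p * (M * T + β' * S) + (2:ℝ) ^ p * (M * R ^ p) := by
        linarith
    _ = (2:ℝ) ^ p * M * R ^ p + (2:ℝ) ^ p * β' * S + (2:ℝ) ^ p * M * T := by ring
    _ ≤ C * R ^ p + C * S + C * T := by linarith
    _ = C * (R ^ p + S + T) := by ring
end

section
/- Let N ≥ 3 be an integer, N/(N−1) < p < 2, α := (p−1)(N−1), β := (p−1)/(α−1), σ := (2−p)/(p−1), and for t > 0 let u_t(x) := ∫_{|x|}^1 (β y + t y^α)^{−1/(p−1)} dy on B_1 \ {0}. Then there exists C > 0 such that for all t > 1, 0 < R < 1, and every continuously differentiable function φ on B_1 \ {0} with sup_{x∈B_1} ( |x|^σ|φ(x)| + |x|^{σ+1}|∇φ(x)| ) ≤ R, one has sup_{x∈B_1} |x|^{σ+2} | |∇u_t(x) + ∇φ(x)|^p − p|∇u_t(x)|^{p−2} ∇u_t(x)·∇φ(x)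 − |∇u_t(x)|^p | ≤ C R^p. -/
open Metric Filter Set
open scoped Topology

section Aux

/-- MVT bound for rpow with negative exponent on `[m, ∞)`. -/
lemma aux_rpow_lip {γ m x y : ℝ} (hγ : γ < 0) (hm : 0 < m) (hx : m ≤ x) (hy : m ≤ y) :
    |x ^ γ - y ^ γ| ≤ (-γ) * m ^ (γ - 1) * |x - y| := by
  have main : ∀ u v : ℝ, m ≤ u → m ≤ v → u < v →
      |u ^ γ - v ^ γ| ≤ (-γ) * m ^ (γ - 1) * |u - v| := by
    intro u v hu hv huv
    have hcont : ContinuousOn (fun z : ℝ => z ^ γ) (Icc u v) := fun z hz =>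
      (Real.continuousAt_rpow_const z γ
        (Or.inl (ne_of_gt (lt_of_lt_of_le hm (hu.trans hz.1))))).continuousWithinAt
    have hderiv : ∀ z ∈ Ioo u v, HasDerivAt (fun z : ℝ => z ^ γ) (γ * z ^ (γ - 1)) z := by
      intro z hz
      exact Real.hasDerivAt_rpow_const (Or.inl (ne_of_gt (lt_of_lt_of_le hm (hu.trans hz.1.le))))
    obtain ⟨c, hc, hslope⟩ := exists_hasDerivAt_eq_slope (fun z : ℝ => z ^ γ)
      (fun z => γ * z ^ (γ - 1)) huv hcont hderiv
    have hcm : m ≤ c := hu.trans hc.1.le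
    have hid : v ^ γ - u ^ γ = γ * c ^ (γ - 1) * (v - u) :=
      (div_eq_iff (by linarith : v - u ≠ 0)).mp hslope.symm
    have hc1 : c ^ (γ - 1) ≤ m ^ (γ - 1) :=
      Real.rpow_le_rpow_of_nonpos hm hcm (by linarith)
    have hc0 : (0:ℝ) ≤ c ^ (γ - 1) := Real.rpow_nonneg (by linarith) _
    have habs : |u ^ γ - v ^ γ| = (-γ) * c ^ (γ - 1) * (v - u) := by
      rw [abs_sub_comm, hid, abs_mul, abs_mul]
      rw [abs_of_neg hγ, abs_of_nonneg hc0, abs_of_pos (by linarith : (0:ℝ) < v - u)]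
    have h2 : |u - v| = v - u := by rw [abs_sub_comm]; exact abs_of_pos (by linarith)
    rw [habs, h2]
    have hγ' : (0:ℝ) ≤ -γ := by linarith
    exact mul_le_mul_of_nonneg_right (mul_le_mul_of_nonneg_left hc1 hγ') (by linarith)
  rcases lt_trichotomy x y with h | h | h
  · exact main x y hx hy h
  · subst h
    simp only [sub_self, abs_zero, mul_zero]
    exact le_rfl
  · rw [abs_sub_comm, abs_sub_comm x y]
    exact main y x hy hx h


/-- First-order Taylor bound for `z ↦ z ^ q`, `0 < q < 1`, on `[m, ∞)`. -/
lemma aux_taylor {q m x y : ℝ} (hq0 : 0 < q) (hq1 : q < 1) (hm : 0 < m)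
    (hx : m ≤ x) (hy : m ≤ y) :
    |x ^ q - y ^ q - q * y ^ (q - 1) * (x - y)| ≤ q * ((1 - q) * m ^ (q - 2)) * (x - y) ^ 2 := by
  rcases eq_or_ne x y with rfl | hxy
  · simp
  -- obtain the MVT point
  obtain ⟨c, hcm, hcy, hid⟩ : ∃ c, m ≤ c ∧ |c - y| ≤ |x - y| ∧
      x ^ q - y ^ q = q * c ^ (q - 1) * (x - y) := by
    have hcont : ∀ u v : ℝ, m ≤ u → ContinuousOn (fun z : ℝ => z ^ q) (Icc u v) := by
      intro u v hu z hz
      exact (Real.continuousAt_rpow_const z q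
        (Or.inl (ne_of_gt (lt_of_lt_of_le hm (hu.trans hz.1))))).continuousWithinAt
    have hderiv : ∀ u v : ℝ, m ≤ u → ∀ z ∈ Ioo u v,
        HasDerivAt (fun z : ℝ => z ^ q) (q * z ^ (q - 1)) z := by
      intro u v hu z hz
      exact Real.hasDerivAt_rpow_const (Or.inl (ne_of_gt (lt_of_lt_of_le hm (hu.trans hz.1.le))))
    rcases lt_or_gt_of_ne hxy with h | h
    · obtain ⟨c, hc, hslope⟩ := exists_hasDerivAt_eq_slope (fun z : ℝ => z ^ q)
        (fun z => q * z ^ (q - 1)) h (hcont x y hx) (hderiv x y hx)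
      refine ⟨c, hx.trans hc.1.le, ?_, ?_⟩
      · rw [abs_sub_comm c y, abs_sub_comm x y, abs_of_pos (by linarith [hc.2] : (0:ℝ) < y - c),
          abs_of_pos (by linarith : (0:ℝ) < y - x)]
        linarith [hc.1, hc.2]
      · have := (div_eq_iff (by linarith : y - x ≠ 0)).mp hslope.symm
        linear_combination -this
    · obtain ⟨c, hc, hslope⟩ := exists_hasDerivAt_eq_slope (fun z : ℝ => z ^ q)
        (fun z => q * z ^ (q - 1)) h (hcont y x hy) (hderiv y x hy)
      refine ⟨c, hy.trans hc.1.le, ?_, ?_⟩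
      · rw [abs_of_pos (by linarith [hc.1] : (0:ℝ) < c - y),
          abs_of_pos (by linarith : (0:ℝ) < x - y)]
        linarith [hc.2]
      · exact (div_eq_iff (by linarith : x - y ≠ 0)).mp hslope.symm
  have hlip : |c ^ (q - 1) - y ^ (q - 1)| ≤ (1 - q) * m ^ (q - 2) * |c - y| := by
    have h := aux_rpow_lip (by linarith : q - 1 < 0) hm hcm hy
    have e1 : -(q - 1) = 1 - q := by ring
    have e2 : q - 1 - 1 = q - 2 := by ring
    rwa [e1, e2] at h
  have hE : x ^ q - y ^ q - q * y ^ (q - 1) * (x - y)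
      = q * ((c ^ (q - 1) - y ^ (q - 1)) * (x - y)) := by linear_combination hid
  have hm2 : (0:ℝ) ≤ m ^ (q - 2) := Real.rpow_nonneg hm.le _
  calc |x ^ q - y ^ q - q * y ^ (q - 1) * (x - y)|
      = q * (|c ^ (q - 1) - y ^ (q - 1)| * |x - y|) := by
        rw [hE, abs_mul, abs_mul, abs_of_pos hq0]
    _ ≤ q * ((1 - q) * m ^ (q - 2) * |c - y| * |x - y|) := by
        apply mul_le_mul_of_nonneg_left _ hq0.le
        exact mul_le_mul_of_nonneg_right hlip (abs_nonneg _)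
    _ ≤ q * ((1 - q) * m ^ (q - 2) * |x - y| * |x - y|) := by
        apply mul_le_mul_of_nonneg_left _ hq0.le
        apply mul_le_mul_of_nonneg_right _ (abs_nonneg _)
        exact mul_le_mul_of_nonneg_left hcy (mul_nonneg (by linarith) hm2)
    _ = q * ((1 - q) * m ^ (q - 2)) * (x - y) ^ 2 := by
        rw [sq, ← abs_mul_abs_self (x - y)]; ring

lemma quarter_bound (q : ℝ) : q * (1 - q) ≤ 1/4 := by nlinarith [sq_nonneg (q - 1/2)]

lemma pow2_rpow (z e : ℝ) (hz : 0 ≤ z) : (z ^ 2) ^ e = z ^ (2 * e) := by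
  rw [← Real.rpow_natCast z 2, ← Real.rpow_mul hz]
  norm_num

lemma key_ineq {F : Type*} [NormedAddCommGroup F] [InnerProductSpace ℝ F]
    {p : ℝ} (hp1 : 1 < p) (hp2 : p < 2) (a b : F) :
    |‖a + b‖ ^ p - p * ‖a‖ ^ (p - 2) * (inner ℝ a b : ℝ) - ‖a‖ ^ p| ≤ 57 * ‖b‖ ^ p := by
  have hp0 : (0:ℝ) < p := by linarith
  rcases eq_or_ne b 0 with rfl | hb
  · simp [Real.zero_rpow (by linarith : p ≠ 0)]
  have hb0 : (0:ℝ) < ‖b‖ := norm_pos_iff.mpr hb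
  have hbp : (0:ℝ) < ‖b‖ ^ p := Real.rpow_pos_of_pos hb0 p
  have hi : |(inner ℝ a b : ℝ)| ≤ ‖a‖ * ‖b‖ := abs_real_inner_le_norm a b
  by_cases hab : ‖a‖ ≤ 2 * ‖b‖
  · -- Case 1 : ‖a‖ ≤ 2‖b‖, crude bounds
    have hX : ‖a + b‖ ^ p ≤ 9 * ‖b‖ ^ p := by
      have h3 : ‖a + b‖ ≤ 3 * ‖b‖ := (norm_add_le a b).trans (by linarith)
      calc ‖a + b‖ ^ p ≤ (3 * ‖b‖) ^ p := Real.rpow_le_rpow (norm_nonneg _) h3 hp0.le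
        _ = 3 ^ p * ‖b‖ ^ p := Real.mul_rpow (by norm_num) (norm_nonneg b)
        _ ≤ 9 * ‖b‖ ^ p := by
            have h1 : (3:ℝ) ^ p ≤ 3 ^ (2:ℝ) :=
              Real.rpow_le_rpow_of_exponent_le (by norm_num) hp2.le
            have h9 : (3:ℝ) ^ (2:ℝ) = 9 := by
              rw [show (2:ℝ) = ((2:ℕ):ℝ) by norm_num, Real.rpow_natCast]; norm_num
            nlinarith [hbp.le]
    have hZ : ‖a‖ ^ p ≤ 4 * ‖b‖ ^ p := by
      calc ‖a‖ ^ p ≤ (2 * ‖b‖) ^ p := Real.rpow_le_rpow (norm_nonneg _) hab hp0.le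
        _ = 2 ^ p * ‖b‖ ^ p := Real.mul_rpow (by norm_num) (norm_nonneg b)
        _ ≤ 4 * ‖b‖ ^ p := by
            have h1 : (2:ℝ) ^ p ≤ 2 ^ (2:ℝ) :=
              Real.rpow_le_rpow_of_exponent_le (by norm_num) hp2.le
            have h4 : (2:ℝ) ^ (2:ℝ) = 4 := by
              rw [show (2:ℝ) = ((2:ℕ):ℝ) by norm_num, Real.rpow_natCast]; norm_num
            nlinarith [hbp.le]
    have hbb1 : ‖b‖ ^ (p-1) * ‖b‖ = ‖b‖ ^ p := by
      calc ‖b‖ ^ (p-1) * ‖b‖ = ‖b‖ ^ (p-1) * ‖b‖ ^ (1:ℝ) := by rw [Real.rpow_one]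
        _ = ‖b‖ ^ (p-1+1) := (Real.rpow_add hb0 _ _).symm
        _ = ‖b‖ ^ p := by congr 1; ring
    have h1 : ‖a‖ ^ (p-2) * ‖a‖ ≤ 2 * ‖b‖ ^ (p-1) := by
      rcases eq_or_lt_of_le (norm_nonneg a) with ha0 | ha0
      · rw [← ha0]
        simp only [mul_zero]
        positivity
      · have e : ‖a‖ ^ (p-2) * ‖a‖ = ‖a‖ ^ (p-1) := by
          calc ‖a‖ ^ (p-2) * ‖a‖ = ‖a‖ ^ (p-2) * ‖a‖ ^ (1:ℝ) := by rw [Real.rpow_one]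
            _ = ‖a‖ ^ (p-2+1) := (Real.rpow_add ha0 _ _).symm
            _ = ‖a‖ ^ (p-1) := by congr 1; ring
        rw [e]
        calc ‖a‖ ^ (p-1) ≤ (2*‖b‖) ^ (p-1) :=
              Real.rpow_le_rpow (norm_nonneg a) hab (by linarith)
          _ = 2 ^ (p-1) * ‖b‖ ^ (p-1) := Real.mul_rpow (by norm_num) (norm_nonneg b)
          _ ≤ 2 * ‖b‖ ^ (p-1) := by
              have h2 : (2:ℝ) ^ (p-1) ≤ 2 ^ (1:ℝ) :=
                Real.rpow_le_rpow_of_exponent_le (by norm_num) (by linarith)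
              rw [Real.rpow_one] at h2
              exact mul_le_mul_of_nonneg_right h2 (Real.rpow_nonneg (norm_nonneg b) _)
    have hY : p * ‖a‖ ^ (p-2) * |(inner ℝ a b : ℝ)| ≤ 4 * ‖b‖ ^ p := by
      calc p * ‖a‖ ^ (p-2) * |(inner ℝ a b : ℝ)|
          ≤ p * ‖a‖ ^ (p-2) * (‖a‖ * ‖b‖) := by
            apply mul_le_mul_of_nonneg_left hi
            positivity
        _ = p * ((‖a‖ ^ (p-2) * ‖a‖) * ‖b‖) := by ring
        _ ≤ p * ((2 * ‖b‖ ^ (p-1)) * ‖b‖) := by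
            apply mul_le_mul_of_nonneg_left _ hp0.le
            exact mul_le_mul_of_nonneg_right h1 (norm_nonneg b)
        _ = 2 * p * (‖b‖ ^ (p-1) * ‖b‖) := by ring
        _ = 2 * p * ‖b‖ ^ p := by rw [hbb1]
        _ ≤ 4 * ‖b‖ ^ p := by nlinarith [hbp.le]
    have hXnn : (0:ℝ) ≤ ‖a + b‖ ^ p := Real.rpow_nonneg (norm_nonneg _) _
    have hZnn : (0:ℝ) ≤ ‖a‖ ^ p := Real.rpow_nonneg (norm_nonneg _) _
    have hYabs : |p * ‖a‖ ^ (p-2) * (inner ℝ a b : ℝ)| = p * ‖a‖ ^ (p-2) * |(inner ℝ a b : ℝ)| := by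
      rw [abs_mul, abs_mul, abs_of_pos hp0, abs_of_nonneg (Real.rpow_nonneg (norm_nonneg a) _)]
    have hyabs2 : |p * ‖a‖ ^ (p-2) * (inner ℝ a b : ℝ)| ≤ 4 * ‖b‖ ^ p := by
      rw [hYabs]; exact hY
    have hy1 : p * ‖a‖ ^ (p-2) * (inner ℝ a b : ℝ) ≤ 4 * ‖b‖ ^ p :=
      (le_abs_self _).trans hyabs2
    have hy2 : -(4 * ‖b‖ ^ p) ≤ p * ‖a‖ ^ (p-2) * (inner ℝ a b : ℝ) := by
      have := neg_abs_le (p * ‖a‖ ^ (p-2) * (inner ℝ a b : ℝ))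
      linarith [hyabs2]
    refine abs_le.mpr ⟨?_, ?_⟩
    · linarith [hX, hZ, hXnn, hbp.le]
    · linarith [hX, hZ, hZnn, hbp.le]
  · -- Case 2 : 2‖b‖ < ‖a‖
    push_neg at hab
    have ha0 : (0:ℝ) < ‖a‖ := by linarith
    obtain ⟨s, hs_def⟩ : ∃ s : ℝ, s = 2 * (inner ℝ a b : ℝ) + ‖b‖ ^ 2 := ⟨_, rfl⟩
    obtain ⟨q, hq⟩ : ∃ q : ℝ, q = p / 2 := ⟨_, rfl⟩
    have hq0 : (0:ℝ) < q := by rw [hq]; linarith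
    have hq1 : q < 1 := by rw [hq]; linarith
    have hq12 : 1/2 < q := by rw [hq]; linarith
    have h2q : 2 * q = p := by rw [hq]; ring
    have hsum : ‖a + b‖ ^ 2 = ‖a‖ ^ 2 + s := by
      rw [hs_def, norm_add_sq_real]; ring
    have habn : ‖a‖ - ‖b‖ ≤ ‖a + b‖ := by
      have h := norm_sub_norm_le a (-b)
      simp only [norm_neg, sub_neg_eq_add] at h
      linarith
    have hab2 : ‖a‖ / 2 ≤ ‖a + b‖ := by linarith
    have hlow : ‖a‖ ^ 2 / 4 ≤ ‖a‖ ^ 2 + s := by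
      rw [← hsum]
      nlinarith [hab2, norm_nonneg (a + b)]
    have hm4 : (0:ℝ) < ‖a‖ ^ 2 / 4 := by positivity
    have hy4 : ‖a‖ ^ 2 / 4 ≤ ‖a‖ ^ 2 := by nlinarith
    have H := aux_taylor hq0 hq1 hm4 hlow hy4
    rw [add_sub_cancel_left, ← hsum] at H
    have e1 : (‖a + b‖ ^ 2) ^ q = ‖a + b‖ ^ p := by
      rw [pow2_rpow _ _ (norm_nonneg _), h2q]
    have e2 : (‖a‖ ^ 2) ^ q = ‖a‖ ^ p := by
      rw [pow2_rpow _ _ (norm_nonneg _), h2q]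
    have e3 : (‖a‖ ^ 2) ^ (q - 1) = ‖a‖ ^ (p - 2) := by
      rw [pow2_rpow _ _ (norm_nonneg _), show 2 * (q - 1) = p - 2 by rw [← h2q]; ring]
    rw [e1, e2, e3] at H
    -- bound the RHS of H
    have hr42 : ‖a‖ ^ (p-4) * ‖a‖ ^ 2 = ‖a‖ ^ (p-2) := by
      rw [← Real.rpow_natCast ‖a‖ 2, ← Real.rpow_add ha0]
      congr 1; push_cast; ring
    have e4 : (‖a‖ ^ 2 / 4) ^ (q - 2) ≤ 16 * ‖a‖ ^ (p-4) := by
      have h16 : (4:ℝ) ^ (2 - q) ≤ 16 := by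
        calc (4:ℝ) ^ (2 - q) ≤ 4 ^ (2:ℝ) :=
              Real.rpow_le_rpow_of_exponent_le (by norm_num) (by linarith)
          _ = 16 := by rw [show (2:ℝ) = ((2:ℕ):ℝ) by norm_num, Real.rpow_natCast]; norm_num
      calc (‖a‖ ^ 2 / 4) ^ (q - 2) = (‖a‖ ^ 2) ^ (q-2) / 4 ^ (q-2) :=
            Real.div_rpow (by positivity) (by norm_num : (0:ℝ) ≤ 4) (q-2)
        _ = ‖a‖ ^ (p-4) * 4 ^ (2-q) := by
            rw [pow2_rpow _ _ (norm_nonneg a), show 2 * (q - 2) = p - 4 by rw [← h2q]; ring,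
              div_eq_mul_inv, ← Real.rpow_neg (by norm_num : (0:ℝ) ≤ 4),
              show -(q - 2) = 2 - q by ring]
        _ ≤ ‖a‖ ^ (p-4) * 16 :=
            mul_le_mul_of_nonneg_left h16 (Real.rpow_nonneg (norm_nonneg a) _)
        _ = 16 * ‖a‖ ^ (p-4) := mul_comm _ _
    have hs2 : s ^ 2 ≤ 25/4 * (‖a‖ ^ 2 * ‖b‖ ^ 2) := by
      have h1 : |s| ≤ 5/2 * (‖a‖ * ‖b‖) := by
        rw [hs_def]
        calc |2 * (inner ℝ a b : ℝ) + ‖b‖ ^ 2| ≤ |2 * (inner ℝ a b : ℝ)| + |‖b‖ ^ 2| := abs_add_le _ _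
          _ = 2 * |(inner ℝ a b : ℝ)| + ‖b‖ ^ 2 := by
              rw [abs_mul, abs_of_nonneg (sq_nonneg ‖b‖)]; norm_num
          _ ≤ 5/2 * (‖a‖ * ‖b‖) := by nlinarith [hi, norm_nonneg b, hb0]
      have h2 := mul_self_le_mul_self (abs_nonneg s) h1
      rw [abs_mul_abs_self] at h2
      calc s ^ 2 = s * s := sq s
        _ ≤ 5/2 * (‖a‖ * ‖b‖) * (5/2 * (‖a‖ * ‖b‖)) := h2
        _ = 25/4 * (‖a‖ ^ 2 * ‖b‖ ^ 2) := by ring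
    have hX0 : (0:ℝ) ≤ (‖a‖ ^ 2 / 4) ^ (q - 2) := Real.rpow_nonneg hm4.le _
    have hA0 : (0:ℝ) ≤ ‖a‖ ^ (p-4) := Real.rpow_nonneg (norm_nonneg a) _
    have hq14 : q * (1 - q) ≤ 1/4 := quarter_bound q
    have hfac : q * ((1 - q) * (‖a‖ ^ 2 / 4) ^ (q - 2)) ≤ 8 * ‖a‖ ^ (p-4) := by
      calc q * ((1 - q) * (‖a‖ ^ 2 / 4) ^ (q - 2))
          = (q * (1 - q)) * (‖a‖ ^ 2 / 4) ^ (q - 2) := by ring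
        _ ≤ (1/4) * (‖a‖ ^ 2 / 4) ^ (q - 2) := mul_le_mul_of_nonneg_right hq14 hX0
        _ ≤ (1/4) * (16 * ‖a‖ ^ (p-4)) := mul_le_mul_of_nonneg_left e4 (by norm_num)
        _ ≤ 8 * ‖a‖ ^ (p-4) := by linarith [hA0]
    have hBr : |‖a + b‖ ^ p - ‖a‖ ^ p - q * ‖a‖ ^ (p-2) * s| ≤ 50 * ‖a‖ ^ (p-2) * ‖b‖ ^ 2 := by
      refine H.trans ?_
      calc q * ((1 - q) * (‖a‖ ^ 2 / 4) ^ (q - 2)) * s ^ 2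
          ≤ 8 * ‖a‖ ^ (p-4) * s ^ 2 := mul_le_mul_of_nonneg_right hfac (sq_nonneg s)
        _ ≤ 8 * ‖a‖ ^ (p-4) * (25/4 * (‖a‖ ^ 2 * ‖b‖ ^ 2)) := by
            apply mul_le_mul_of_nonneg_left hs2
            positivity
        _ = 50 * (‖a‖ ^ (p-4) * ‖a‖ ^ 2) * ‖b‖ ^ 2 := by ring
        _ = 50 * ‖a‖ ^ (p-2) * ‖b‖ ^ 2 := by rw [hr42]
    have hT : ‖a + b‖ ^ p - p * ‖a‖ ^ (p-2) * (inner ℝ a b : ℝ) - ‖a‖ ^ p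
        = (‖a + b‖ ^ p - ‖a‖ ^ p - q * ‖a‖ ^ (p-2) * s) + q * ‖a‖ ^ (p-2) * ‖b‖ ^ 2 := by
      rw [hs_def]
      linear_combination (‖a‖ ^ (p-2) * (inner ℝ a b : ℝ)) * h2q
    have hanb : ‖a‖ ^ (p-2) ≤ ‖b‖ ^ (p-2) :=
      Real.rpow_le_rpow_of_nonpos hb0 (by linarith) (by linarith)
    have hbb2 : ‖b‖ ^ (p-2) * ‖b‖ ^ 2 = ‖b‖ ^ p := by
      rw [← Real.rpow_natCast ‖b‖ 2, ← Real.rpow_add hb0]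
      congr 1; push_cast; ring
    have hapn : (0:ℝ) ≤ ‖a‖ ^ (p-2) := Real.rpow_nonneg (norm_nonneg a) _
    rw [hT]
    calc |(‖a + b‖ ^ p - ‖a‖ ^ p - q * ‖a‖ ^ (p-2) * s) + q * ‖a‖ ^ (p-2) * ‖b‖ ^ 2|
        ≤ |‖a + b‖ ^ p - ‖a‖ ^ p - q * ‖a‖ ^ (p-2) * s| + q * ‖a‖ ^ (p-2) * ‖b‖ ^ 2 := by
          refine (abs_add_le _ _).trans ?_
          rw [abs_of_nonneg (mul_nonneg (mul_nonneg hq0.le hapn) (sq_nonneg ‖b‖))]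
      _ ≤ 50 * ‖a‖ ^ (p-2) * ‖b‖ ^ 2 + 1 * (‖a‖ ^ (p-2) * ‖b‖ ^ 2) := by
          refine add_le_add hBr ?_
          have : q * (‖a‖ ^ (p-2) * ‖b‖ ^ 2) ≤ 1 * (‖a‖ ^ (p-2) * ‖b‖ ^ 2) :=
            mul_le_mul_of_nonneg_right hq1.le (by positivity)
          linarith [this]
      _ = 51 * (‖a‖ ^ (p-2) * ‖b‖ ^ 2) := by ring
      _ ≤ 51 * (‖b‖ ^ (p-2) * ‖b‖ ^ 2) := by
          have := mul_le_mul_of_nonneg_right hanb (sq_nonneg ‖b‖)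
          linarith [this]
      _ = 51 * ‖b‖ ^ p := by rw [hbb2]
      _ ≤ 57 * ‖b‖ ^ p := by linarith [hbp.le]

end Aux

/-- "Into", part 2: weighted bound on the quadratic remainder
`|∇u_t + ∇φ|^p - p|∇u_t|^{p-2}∇u_t·∇φ - |∇u_t|^p` for `φ` in the ball of radius `R` of the
weighted space `X`. -/
theorem stmt_14 (N : ℕ) (hN : 3 ≤ N) (p : ℝ)
    (hp1 : (N : ℝ) / ((N : ℝ) - 1) < p) (hp2 : p < 2)
    (α β σ : ℝ) (hα : α = (p - 1) * ((N : ℝ) - 1)) (hβ : β = (p - 1) / (α - 1))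
    (hσ : σ = (2 - p) / (p - 1))
    (u : ℝ → EuclideanSpace ℝ (Fin N) → ℝ)
    (hu : ∀ (t : ℝ) (x : EuclideanSpace ℝ (Fin N)),
      u t x = ∫ y in (‖x‖)..(1 : ℝ), (β * y + t * y ^ α) ^ (-(1 / (p - 1)))) :
    ∃ C > (0 : ℝ), ∀ R t : ℝ, 0 < R → R < 1 → 1 < t →
      ∀ φ : EuclideanSpace ℝ (Fin N) → ℝ,
        ContDiffOn ℝ 1 φ (ball (0 : EuclideanSpace ℝ (Fin N)) 1 \ {0}) →
        (∀ x ∈ ball (0 : EuclideanSpace ℝ (Fin N)) 1 \ {0},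
          ‖x‖ ^ σ * |φ x| + ‖x‖ ^ (σ + 1) * ‖gradient φ x‖ ≤ R) →
        ∀ x ∈ ball (0 : EuclideanSpace ℝ (Fin N)) 1 \ {0},
          ‖x‖ ^ (σ + 2) *
            |‖gradient (u t) x + gradient φ x‖ ^ p
              - p * ‖gradient (u t) x‖ ^ (p - 2) *
                  (inner ℝ (gradient (u t) x) (gradient φ x) : ℝ)
              - ‖gradient (u t) x‖ ^ p| ≤ C * R ^ p := by
  have hN3 : (3:ℝ) ≤ (N:ℝ) := by exact_mod_cast hN
  have hp1' : 1 < p := by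
    have h : (1:ℝ) < (N:ℝ) / ((N:ℝ) - 1) := (one_lt_div (by linarith)).mpr (by linarith)
    linarith
  refine ⟨57, by norm_num, ?_⟩
  intro R t hR hR1 ht φ hφ hφR x hx
  obtain ⟨hx1, hx0'⟩ := hx
  have hx0 : x ≠ 0 := by simpa using hx0'
  have hnx : (0:ℝ) < ‖x‖ := norm_pos_iff.mpr hx0
  have hkey := key_ineq hp1' hp2 (gradient (u t) x) (gradient φ x)
  have hgb : ‖x‖ ^ (σ + 1) * ‖gradient φ x‖ ≤ R := by
    have h := hφR x ⟨hx1, hx0'⟩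
    have h2 : 0 ≤ ‖x‖ ^ σ * |φ x| :=
      mul_nonneg (Real.rpow_nonneg (norm_nonneg x) σ) (abs_nonneg _)
    linarith
  have hxp : (0:ℝ) < ‖x‖ ^ (σ + 1) := Real.rpow_pos_of_pos hnx _
  have hb : ‖gradient φ x‖ ≤ R / ‖x‖ ^ (σ + 1) := by
    rw [le_div_iff₀ hxp, mul_comm]
    exact hgb
  have hp10 : p - 1 ≠ 0 := sub_ne_zero.mpr (ne_of_gt hp1')
  have hσ2 : (σ + 1) * p = σ + 2 := by
    rw [hσ]
    field_simp
    ring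
  have hbp : ‖gradient φ x‖ ^ p ≤ R ^ p / ‖x‖ ^ (σ + 2) := by
    calc ‖gradient φ x‖ ^ p ≤ (R / ‖x‖ ^ (σ + 1)) ^ p :=
          Real.rpow_le_rpow (norm_nonneg _) hb (by linarith)
      _ = R ^ p / (‖x‖ ^ (σ + 1)) ^ p := Real.div_rpow hR.le hxp.le p
      _ = R ^ p / ‖x‖ ^ (σ + 2) := by
          rw [← Real.rpow_mul (norm_nonneg x), hσ2]
  have hx2 : (0:ℝ) < ‖x‖ ^ (σ + 2) := Real.rpow_pos_of_pos hnx _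
  calc ‖x‖ ^ (σ + 2) *
        |‖gradient (u t) x + gradient φ x‖ ^ p
          - p * ‖gradient (u t) x‖ ^ (p - 2) *
              (inner ℝ (gradient (u t) x) (gradient φ x) : ℝ)
          - ‖gradient (u t) x‖ ^ p|
      ≤ ‖x‖ ^ (σ + 2) * (57 * ‖gradient φ x‖ ^ p) :=
        mul_le_mul_of_nonneg_left hkey hx2.le
    _ ≤ ‖x‖ ^ (σ + 2) * (57 * (R ^ p / ‖x‖ ^ (σ + 2))) := by
        apply mul_le_mul_of_nonneg_left _ hx2.le
        linarith [hbp]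
    _ = 57 * R ^ p := by
        field_simp
end

section
/- Let N ≥ 3 be an integer, N/(N−1) < p < 2, α := (p−1)(N−1), β := (p−1)/(α−1), σ := (2−p)/(p−1), and for t > 0 let u_t(x) := ∫_{|x|}^1 (β y + t y^α)^{−1/(p−1)} dy on B_1 \ {0}. Then there exists C > 0 such that for all R ∈ (0,1), t > 1, and all continuously differentiable functions φ_1, φ_2 on B_1 \ {0} with ‖φ_i‖_X := sup_{x∈B_1} ( |x|^σ|φ_i(x)| + |x|^{σ+1}|∇φ_i(x)| ) ≤ R for i = 1, 2, the function I(x) := |∇u_t + ∇φ_2|^p − p|∇u_t|^{p−2}∇u_t·∇φ_2 − |∇u_t + ∇φ_1|^p + p|∇u_t|^{p−2}∇u_t·∇φ_1 (evaluated at x) satisfies sup_{x∈B_1} |x|^{σ+2}|I(x)| ≤ C R^{p−1} ‖φ_2 − φ_1‖_X. -/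
open Metric Filter Set
open scoped Topology

section AuxStmt15
open scoped RealInnerProductSpace

variable {E : Type*} [NormedAddCommGroup E] [InnerProductSpace ℝ E]

variable {E : Type*} [NormedAddCommGroup E] [InnerProductSpace ℝ E]

/-- pointwise identity -/
lemma aux_sq_rpow (q : ℝ) (y : E) : ((‖y‖ ^ 2 : ℝ)) ^ (q / 2) = ‖y‖ ^ q := by
  rcases eq_or_ne y 0 with rfl | hy
  · rcases eq_or_ne q 0 with rfl | hq
    · norm_num
    · simp [Real.zero_rpow, hq, div_eq_zero_iff, (by norm_num : (2:ℝ) ≠ 0)]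
  · rw [← Real.rpow_natCast ‖y‖ 2, ← Real.rpow_mul (norm_nonneg y)]
    congr 1; push_cast; ring

lemma aux_norm_rpow_deriv (q : ℝ) {w : E} (hw : w ≠ 0) :
    HasFDerivAt (fun y : E => ‖y‖ ^ q) ((q * ‖w‖ ^ (q - 2)) • (innerSL ℝ w)) w := by
  have hw2 : (‖w‖ ^ 2 : ℝ) ≠ 0 := (pow_pos (norm_pos_iff.2 hw) 2).ne'
  have h2 : HasFDerivAt (fun y : E => (‖y‖ ^ 2 : ℝ)) (2 • (innerSL ℝ w)) w := by
    simpa using (hasFDerivAt_id w).norm_sq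
  have hr : HasDerivAt (fun z : ℝ => z ^ (q / 2)) ((q / 2) * (‖w‖ ^ 2 : ℝ) ^ (q / 2 - 1)) (‖w‖ ^ 2) :=
    Real.hasDerivAt_rpow_const (Or.inl hw2)
  have := hr.comp_hasFDerivAt w h2
  have hkey : (‖w‖ ^ 2 : ℝ) ^ (q / 2 - 1) = ‖w‖ ^ (q - 2) := by
    rw [← Real.rpow_natCast ‖w‖ 2, ← Real.rpow_mul (norm_nonneg w)]
    rw [show (2:ℕ) * ((q:ℝ)/2 - 1) = q - 2 by push_cast; ring]
  have heq : (fun y : E => ((‖y‖ ^ 2 : ℝ)) ^ (q / 2)) = fun y : E => ‖y‖ ^ q := by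
    funext y; exact aux_sq_rpow q y
  simp only [Function.comp_def] at this
  rw [heq] at this
  have hL : ((q / 2 * (‖w‖ ^ 2 : ℝ) ^ (q / 2 - 1)) • (2:ℕ) • (innerSL ℝ w)) =
      ((q * ‖w‖ ^ (q - 2)) • (innerSL ℝ w)) := by
    ext y
    simp only [ContinuousLinearMap.smul_apply, smul_eq_mul, hkey, innerSL_apply_apply,
      nsmul_eq_mul, Nat.cast_ofNat]
    ring
  rwa [hL] at this

lemma aux_norm_rpow_deriv_zero {p : ℝ} (hp1 : 1 < p) :
    HasFDerivAt (fun y : E => ‖y‖ ^ p) (0 : E →L[ℝ] ℝ) 0 := by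
  rw [hasFDerivAt_iff_isLittleO_nhds_zero]
  simp only [zero_add, norm_zero, ContinuousLinearMap.zero_apply, sub_zero,
    Real.zero_rpow (by linarith : p ≠ 0)]
  rw [Asymptotics.isLittleO_iff]
  intro c hc
  have hδ : (0:ℝ) < c ^ (1 / (p - 1)) := Real.rpow_pos_of_pos hc _
  rw [Metric.eventually_nhds_iff]
  refine ⟨c ^ (1 / (p - 1)), hδ, fun {y} hy => ?_⟩
  rw [dist_zero_right] at hy
  rcases eq_or_ne y 0 with rfl | hy0
  · simp [Real.zero_rpow (by linarith : p ≠ 0)]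
  · have h1 : ‖y‖ ^ p = ‖y‖ ^ (p - 1) * ‖y‖ := by
      rw [← Real.rpow_add_one (norm_ne_zero_iff.2 hy0) (p - 1)]; ring_nf
    have h2 : ‖y‖ ^ (p - 1) ≤ c := by
      have := Real.rpow_le_rpow (norm_nonneg y) hy.le (by linarith : (0:ℝ) ≤ p - 1)
      rwa [← Real.rpow_mul hc.le, one_div, inv_mul_cancel₀ (by linarith : p - 1 ≠ 0),
        Real.rpow_one] at this
    have : ‖(‖y‖ ^ p : ℝ)‖ = ‖y‖ ^ p := by
      rw [Real.norm_eq_abs, abs_of_nonneg (Real.rpow_nonneg (norm_nonneg y) p)]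
    rw [this, h1]
    exact mul_le_mul_of_nonneg_right h2 (norm_nonneg y)

lemma aux_g_deriv_s15 {p : ℝ} (hp1 : 1 < p) (hp2 : p < 2) (w : E) :
    HasFDerivAt (fun y : E => ‖y‖ ^ p) ((p * ‖w‖ ^ (p - 2)) • (innerSL ℝ w)) w := by
  rcases eq_or_ne w 0 with rfl | hw
  · have : ((p * ‖(0:E)‖ ^ (p - 2)) • (innerSL ℝ (0:E))) = (0 : E →L[ℝ] ℝ) := by
      simp
    rw [this]; exact aux_norm_rpow_deriv_zero hp1
  · exact aux_norm_rpow_deriv p hw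

lemma aux_normF {p : ℝ} (hp1 : 1 < p) (hp2 : p < 2) (w : E) :
    ‖(‖w‖ ^ (p - 2) : ℝ) • w‖ = ‖w‖ ^ (p - 1) := by
  rcases eq_or_ne w 0 with rfl | hw
  · simp [Real.zero_rpow (by linarith : p - 1 ≠ 0)]
  · rw [norm_smul, Real.norm_eq_abs,
      abs_of_nonneg (Real.rpow_nonneg (norm_nonneg w) _),
      ← Real.rpow_add_one (norm_ne_zero_iff.2 hw) (p - 2)]
    ring_nf

lemma aux_F_deriv {p : ℝ} {w : E} (hw : w ≠ 0) :
    HasFDerivAt (fun y : E => (‖y‖ ^ (p - 2) : ℝ) • y)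
      ((‖w‖ ^ (p - 2) : ℝ) • ContinuousLinearMap.id ℝ E
        + (((p - 2) * ‖w‖ ^ (p - 4)) • (innerSL ℝ w)).smulRight w) w := by
  have hc : HasFDerivAt (fun y : E => (‖y‖ ^ (p - 2) : ℝ))
      (((p - 2) * ‖w‖ ^ ((p - 2) - 2)) • (innerSL ℝ w)) w := aux_norm_rpow_deriv (p - 2) hw
  have := hc.smul (hasFDerivAt_id w)
  convert this using 2
  · rfl
  · rw [show p - 2 - 2 = p - 4 from by ring]
    rfl

lemma aux_F_deriv_norm {p : ℝ} (hp1 : 1 < p) (hp2 : p < 2) {w : E} (hw : w ≠ 0) :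
    ‖(‖w‖ ^ (p - 2) : ℝ) • ContinuousLinearMap.id ℝ E
        + (((p - 2) * ‖w‖ ^ (p - 4)) • (innerSL ℝ w)).smulRight w‖ ≤ 2 * ‖w‖ ^ (p - 2) := by
  have hwn : (0:ℝ) < ‖w‖ := norm_pos_iff.2 hw
  apply ContinuousLinearMap.opNorm_le_bound _ (by positivity)
  intro h
  have h1 : ‖((‖w‖ ^ (p - 2) : ℝ) • ContinuousLinearMap.id ℝ E) h‖ ≤ ‖w‖ ^ (p - 2) * ‖h‖ := by
    simp only [ContinuousLinearMap.smul_apply, ContinuousLinearMap.id_apply, norm_smul,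
      Real.norm_eq_abs, abs_of_nonneg (Real.rpow_nonneg hwn.le _)]
    exact le_rfl
  have h2 : ‖((((p - 2) * ‖w‖ ^ (p - 4)) • (innerSL ℝ w)).smulRight w) h‖
      ≤ (2 - p) * ‖w‖ ^ (p - 2) * ‖h‖ := by
    simp only [ContinuousLinearMap.smulRight_apply, ContinuousLinearMap.smul_apply,
      innerSL_apply_apply, norm_smul, Real.norm_eq_abs, smul_eq_mul]
    rw [abs_mul, abs_of_nonpos (by nlinarith [Real.rpow_nonneg hwn.le (p-4)] :
        (p - 2) * ‖w‖ ^ (p - 4) ≤ 0)]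
    have hi : |(inner ℝ w h : ℝ)| ≤ ‖w‖ * ‖h‖ := abs_real_inner_le_norm w h
    have hr : ‖w‖ ^ (p - 4) * ‖w‖ * ‖w‖ = ‖w‖ ^ (p - 2) := by
      rw [← Real.rpow_add_one hwn.ne' (p - 4), ← Real.rpow_add_one hwn.ne' (p - 4 + 1)]
      ring_nf
    calc -((p - 2) * ‖w‖ ^ (p - 4)) * |(inner ℝ w h : ℝ)| * ‖w‖
        ≤ (2 - p) * ‖w‖ ^ (p - 4) * (‖w‖ * ‖h‖) * ‖w‖ := by
          have hnn : (0:ℝ) ≤ (2 - p) * ‖w‖ ^ (p - 4) := by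
            have := Real.rpow_nonneg hwn.le (p - 4); nlinarith
          nlinarith [mul_le_mul_of_nonneg_left hi hnn, norm_nonneg w]
      _ = (2 - p) * ‖w‖ ^ (p - 2) * ‖h‖ := by rw [← hr]; ring
  calc ‖_‖ ≤ ‖w‖ ^ (p - 2) * ‖h‖ + (2 - p) * ‖w‖ ^ (p - 2) * ‖h‖ :=
        le_trans (norm_add_le _ _) (add_le_add h1 h2)
    _ ≤ 2 * ‖w‖ ^ (p - 2) * ‖h‖ := by
        have h3 := Real.rpow_nonneg hwn.le (p - 2)
        nlinarith [mul_nonneg (mul_nonneg (by linarith : (0:ℝ) ≤ p - 1) h3) (norm_nonneg h)]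

lemma aux_F_holder_aux {p : ℝ} (hp1 : 1 < p) (hp2 : p < 2) (ξ η : E) (hle : ‖η‖ ≤ ‖ξ‖) :
    ‖(‖ξ‖ ^ (p - 2) : ℝ) • ξ - (‖η‖ ^ (p - 2) : ℝ) • η‖ ≤ 4 * ‖ξ - η‖ ^ (p - 1) := by
  rcases eq_or_ne ξ η with rfl | hne
  · simp [Real.zero_rpow (by linarith : p - 1 ≠ 0)]
  set d := ‖ξ - η‖ with hd
  have hdpos : (0:ℝ) < d := norm_pos_iff.2 (sub_ne_zero.2 hne)
  by_cases hA : ‖ξ‖ ≤ 2 * d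
  · have hη : ‖η‖ ≤ 2 * d := le_trans hle hA
    have b1 : ‖(‖ξ‖ ^ (p - 2) : ℝ) • ξ‖ ≤ (2 * d) ^ (p - 1) := by
      rw [aux_normF hp1 hp2]
      exact Real.rpow_le_rpow (norm_nonneg ξ) hA (by linarith)
    have b2 : ‖(‖η‖ ^ (p - 2) : ℝ) • η‖ ≤ (2 * d) ^ (p - 1) := by
      rw [aux_normF hp1 hp2]
      exact Real.rpow_le_rpow (norm_nonneg η) hη (by linarith)
    have h2p : (2:ℝ) ^ (p - 1) ≤ 2 := by
      have := Real.rpow_le_rpow_of_exponent_le (one_le_two) (by linarith : p - 1 ≤ 1)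
      rwa [Real.rpow_one] at this
    calc ‖(‖ξ‖ ^ (p - 2) : ℝ) • ξ - (‖η‖ ^ (p - 2) : ℝ) • η‖
        ≤ (2 * d) ^ (p - 1) + (2 * d) ^ (p - 1) := le_trans (norm_sub_le _ _) (add_le_add b1 b2)
      _ = 2 * (2 ^ (p - 1) * d ^ (p - 1)) := by
          rw [Real.mul_rpow (by norm_num) hdpos.le]; ring
      _ ≤ 4 * d ^ (p - 1) := by
          have hdp : (0:ℝ) ≤ d ^ (p - 1) := Real.rpow_nonneg hdpos.le _
          nlinarith
  · push_neg at hA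
    set s : Set E := Metric.closedBall ξ d with hs
    have hmem : ∀ y ∈ s, d ≤ ‖y‖ := by
      intro y hy
      rw [hs, Metric.mem_closedBall, dist_eq_norm] at hy
      have : ‖ξ‖ - ‖y‖ ≤ d := le_trans (norm_sub_norm_le _ _) ((norm_sub_rev y ξ) ▸ hy)
      linarith
    have hne0 : ∀ y ∈ s, y ≠ 0 := fun y hy h0 => by
      have := hmem y hy; rw [h0, norm_zero] at this; linarith
    have hbd : ∀ y ∈ s, ‖(‖y‖ ^ (p - 2) : ℝ) • ContinuousLinearMap.id ℝ E
        + (((p - 2) * ‖y‖ ^ (p - 4)) • (innerSL ℝ y)).smulRight y‖ ≤ 2 * d ^ (p - 2) := by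
      intro y hy
      refine le_trans (aux_F_deriv_norm hp1 hp2 (hne0 y hy)) ?_
      have : ‖y‖ ^ (p - 2) ≤ d ^ (p - 2) :=
        Real.rpow_le_rpow_of_nonpos hdpos (hmem y hy) (by linarith)
      linarith
    have hξs : ξ ∈ s := Metric.mem_closedBall_self hdpos.le
    have hηs : η ∈ s := by
      rw [hs, Metric.mem_closedBall, dist_eq_norm, ← norm_sub_rev]
    have := Convex.norm_image_sub_le_of_norm_hasFDerivWithin_le
      (f := fun y : E => (‖y‖ ^ (p - 2) : ℝ) • y)
      (f' := fun y => (‖y‖ ^ (p - 2) : ℝ) • ContinuousLinearMap.id ℝ E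
        + (((p - 2) * ‖y‖ ^ (p - 4)) • (innerSL ℝ y)).smulRight y)
      (fun y hy => (aux_F_deriv (hne0 y hy)).hasFDerivWithinAt) hbd (convex_closedBall ξ d)
      hηs hξs
    refine le_trans this ?_
    have : 2 * d ^ (p - 2) * ‖ξ - η‖ = 2 * d ^ (p - 1) := by
      rw [← hd, mul_assoc, ← Real.rpow_add_one hdpos.ne' (p - 2)]; ring_nf
    rw [this]
    have hdp : (0:ℝ) ≤ d ^ (p - 1) := Real.rpow_nonneg hdpos.le _
    linarith

lemma aux_F_holder {p : ℝ} (hp1 : 1 < p) (hp2 : p < 2) (ξ η : E) :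
    ‖(‖ξ‖ ^ (p - 2) : ℝ) • ξ - (‖η‖ ^ (p - 2) : ℝ) • η‖ ≤ 4 * ‖ξ - η‖ ^ (p - 1) := by
  rcases le_total ‖η‖ ‖ξ‖ with h | h
  · exact aux_F_holder_aux hp1 hp2 ξ η h
  · rw [norm_sub_rev, norm_sub_rev ξ η]
    exact aux_F_holder_aux hp1 hp2 η ξ h

lemma aux_core {p : ℝ} (hp1 : 1 < p) (hp2 : p < 2) (v a b : E) :
    |‖v + b‖ ^ p - p * ‖v‖ ^ (p - 2) * (inner ℝ v b : ℝ)
      - ‖v + a‖ ^ p + p * ‖v‖ ^ (p - 2) * (inner ℝ v a : ℝ)|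
      ≤ (4 * p) * (max ‖a‖ ‖b‖) ^ (p - 1) * ‖b - a‖ := by
  set F : E → E := fun y => (‖y‖ ^ (p - 2) : ℝ) • y with hF
  set K : ℝ := p * (inner ℝ (F v) (b - a) : ℝ) with hK
  set γ : ℝ → E := fun s => v + a + s • (b - a) with hγ
  set h : ℝ → ℝ := fun s => ‖γ s‖ ^ p - s * K with hh
  have hγd : ∀ s : ℝ, HasDerivAt γ (b - a) s := by
    intro s
    have : HasDerivAt (fun s : ℝ => s • (b - a)) ((1:ℝ) • (b - a)) s :=
      (hasDerivAt_id s).smul_const (b - a)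
    rw [one_smul] at this
    exact this.const_add (v + a)
  have hhd : ∀ s : ℝ, HasDerivAt h (p * (inner ℝ (F (γ s)) (b - a) : ℝ) - K) s := by
    intro s
    have hg := aux_g_deriv_s15 hp1 hp2 (γ s)
    have h1 : HasDerivAt (fun s : ℝ => ‖γ s‖ ^ p)
        (((p * ‖γ s‖ ^ (p - 2)) • (innerSL ℝ (γ s))) (b - a)) s :=
      hg.comp_hasDerivAt s (hγd s)
    have h1' : (((p * ‖γ s‖ ^ (p - 2)) • (innerSL ℝ (γ s))) (b - a))
        = p * (inner ℝ (F (γ s)) (b - a) : ℝ) := by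
      simp only [ContinuousLinearMap.smul_apply, innerSL_apply_apply, smul_eq_mul, hF,
        real_inner_smul_left]
      ring
    rw [h1'] at h1
    exact h1.sub ((hasDerivAt_mul_const K))
  obtain ⟨c, hc, hceq⟩ := exists_hasDerivAt_eq_slope h
    (fun s => p * (inner ℝ (F (γ s)) (b - a) : ℝ) - K) zero_lt_one
    (fun s _ => (hhd s).continuousAt.continuousWithinAt) (fun s _ => hhd s)
  have hγ1 : γ 1 = v + b := by simp only [hγ, one_smul]; abel
  have hγ0 : γ 0 = v + a := by rw [hγ]; simp
  have hslope : h 1 - h 0 = ‖v + b‖ ^ p - p * ‖v‖ ^ (p - 2) * (inner ℝ v b : ℝ)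
      - ‖v + a‖ ^ p + p * ‖v‖ ^ (p - 2) * (inner ℝ v a : ℝ) := by
    simp only [hh, hγ1, hγ0, hK, hF, one_mul, zero_mul, sub_zero]
    rw [inner_sub_right, real_inner_smul_left, real_inner_smul_left]
    ring
  have habs : |‖v + b‖ ^ p - p * ‖v‖ ^ (p - 2) * (inner ℝ v b : ℝ)
      - ‖v + a‖ ^ p + p * ‖v‖ ^ (p - 2) * (inner ℝ v a : ℝ)|
      = |p * (inner ℝ (F (γ c)) (b - a) : ℝ) - K| := by
    rw [hceq, ← hslope]; norm_num
  rw [habs]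
  have hinner : p * (inner ℝ (F (γ c)) (b - a) : ℝ) - K
      = p * (inner ℝ (F (γ c) - F v) (b - a) : ℝ) := by
    rw [hK, inner_sub_left]; ring
  rw [hinner, abs_mul, abs_of_pos (by linarith : (0:ℝ) < p)]
  have hFd : ‖F (γ c) - F v‖ ≤ 4 * ‖γ c - v‖ ^ (p - 1) := aux_F_holder hp1 hp2 (γ c) v
  have hγc : ‖γ c - v‖ ≤ max ‖a‖ ‖b‖ := by
    have hc0 : (0:ℝ) ≤ c := hc.1.le
    have hc1 : c ≤ 1 := hc.2.le
    have : γ c - v = (1 - c) • a + c • b := by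
      rw [hγ]; simp only [smul_sub, sub_smul, one_smul]; abel
    rw [this]
    calc ‖(1 - c) • a + c • b‖ ≤ ‖(1 - c) • a‖ + ‖c • b‖ := norm_add_le _ _
      _ = (1 - c) * ‖a‖ + c * ‖b‖ := by
          rw [norm_smul, norm_smul, Real.norm_eq_abs, Real.norm_eq_abs,
            abs_of_nonneg (by linarith), abs_of_nonneg hc0]
      _ ≤ (1 - c) * max ‖a‖ ‖b‖ + c * max ‖a‖ ‖b‖ := by
          have := le_max_left ‖a‖ ‖b‖; have := le_max_right ‖a‖ ‖b‖
          have h1 : (0:ℝ) ≤ 1 - c := by linarith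
          nlinarith
      _ = max ‖a‖ ‖b‖ := by ring
  have hmaxnn : (0:ℝ) ≤ max ‖a‖ ‖b‖ := le_trans (norm_nonneg a) (le_max_left _ _)
  have hpow : ‖γ c - v‖ ^ (p - 1) ≤ (max ‖a‖ ‖b‖) ^ (p - 1) :=
    Real.rpow_le_rpow (norm_nonneg _) hγc (by linarith)
  calc p * |(inner ℝ (F (γ c) - F v) (b - a) : ℝ)|
      ≤ p * (‖F (γ c) - F v‖ * ‖b - a‖) := by
        have := abs_real_inner_le_norm (F (γ c) - F v) (b - a)
        nlinarith [abs_nonneg (inner ℝ (F (γ c) - F v) (b - a) : ℝ)]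
    _ ≤ p * ((4 * (max ‖a‖ ‖b‖) ^ (p - 1)) * ‖b - a‖) := by
        have h4 : ‖F (γ c) - F v‖ ≤ 4 * (max ‖a‖ ‖b‖) ^ (p - 1) := by
          refine le_trans hFd ?_; linarith
        exact mul_le_mul_of_nonneg_left
          (mul_le_mul_of_nonneg_right h4 (norm_nonneg _)) (by linarith)
    _ = (4 * p) * (max ‖a‖ ‖b‖) ^ (p - 1) * ‖b - a‖ := by ring

end AuxStmt15

/-- "Contraction": weighted Lipschitz-type bound for the quadratic remainder,
for `φ₁, φ₂` in the ball of radius `R` of the weighted space `X`: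
`‖I‖_Y ≤ C R^{p-1} ‖φ₂ - φ₁‖_X`. -/
theorem stmt_15 (N : ℕ) (hN : 3 ≤ N) (p : ℝ)
    (hp1 : (N : ℝ) / ((N : ℝ) - 1) < p) (hp2 : p < 2)
    (α β σ : ℝ) (hα : α = (p - 1) * ((N : ℝ) - 1)) (hβ : β = (p - 1) / (α - 1))
    (hσ : σ = (2 - p) / (p - 1))
    (u : ℝ → EuclideanSpace ℝ (Fin N) → ℝ)
    (hu : ∀ (t : ℝ) (x : EuclideanSpace ℝ (Fin N)),
      u t x = ∫ y in (‖x‖)..(1 : ℝ), (β * y + t * y ^ α) ^ (-(1 / (p - 1)))) :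
    ∃ C > (0 : ℝ), ∀ R t : ℝ, 0 < R → R < 1 → 1 < t →
      ∀ φ₁ φ₂ : EuclideanSpace ℝ (Fin N) → ℝ,
        ContDiffOn ℝ 1 φ₁ (ball (0 : EuclideanSpace ℝ (Fin N)) 1 \ {0}) →
        ContDiffOn ℝ 1 φ₂ (ball (0 : EuclideanSpace ℝ (Fin N)) 1 \ {0}) →
        (∀ x ∈ ball (0 : EuclideanSpace ℝ (Fin N)) 1 \ {0},
          ‖x‖ ^ σ * |φ₁ x| + ‖x‖ ^ (σ + 1) * ‖gradient φ₁ x‖ ≤ R) →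
        (∀ x ∈ ball (0 : EuclideanSpace ℝ (Fin N)) 1 \ {0},
          ‖x‖ ^ σ * |φ₂ x| + ‖x‖ ^ (σ + 1) * ‖gradient φ₂ x‖ ≤ R) →
        ∀ x ∈ ball (0 : EuclideanSpace ℝ (Fin N)) 1 \ {0},
          ‖x‖ ^ (σ + 2) *
            |‖gradient (u t) x + gradient φ₂ x‖ ^ p
              - p * ‖gradient (u t) x‖ ^ (p - 2) *
                  (inner ℝ (gradient (u t) x) (gradient φ₂ x) : ℝ)
              - ‖gradient (u t) x + gradient φ₁ x‖ ^ p
              + p * ‖gradient (u t) x‖ ^ (p - 2) *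
                  (inner ℝ (gradient (u t) x) (gradient φ₁ x) : ℝ)| ≤
            C * R ^ (p - 1) *
              sSup ((fun z : EuclideanSpace ℝ (Fin N) =>
                  ‖z‖ ^ σ * |φ₂ z - φ₁ z|
                    + ‖z‖ ^ (σ + 1) * ‖gradient φ₂ z - gradient φ₁ z‖) ''
                (ball (0 : EuclideanSpace ℝ (Fin N)) 1 \ {0})) := by
  have hN3 : (3:ℝ) ≤ (N:ℝ) := by exact_mod_cast hN
  have hden : (0:ℝ) < (N:ℝ) - 1 := by linarith
  have hp1' : 1 < p := lt_trans ((one_lt_div hden).2 (by linarith)) hp1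
  refine ⟨4 * p, by linarith, ?_⟩
  intro R t hR0 hR1 ht φ₁ φ₂ hφ1 hφ2 h1 h2 x hx
  set v := gradient (u t) x
  set a := gradient φ₁ x
  set b := gradient φ₂ x
  set r := ‖x‖ with hr
  have hx0 : x ≠ 0 := fun h0 => hx.2 (by simp [h0])
  have hr0 : (0:ℝ) < r := norm_pos_iff.2 hx0
  -- weighted bounds on the gradients
  have hra : r ^ (σ + 1) * ‖a‖ ≤ R := by
    have := h1 x hx
    have hnn : (0:ℝ) ≤ r ^ σ * |φ₁ x| := by positivity
    linarith
  have hrb : r ^ (σ + 1) * ‖b‖ ≤ R := by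
    have := h2 x hx
    have hnn : (0:ℝ) ≤ r ^ σ * |φ₂ x| := by positivity
    linarith
  set S := ((fun z : EuclideanSpace ℝ (Fin N) =>
      ‖z‖ ^ σ * |φ₂ z - φ₁ z|
        + ‖z‖ ^ (σ + 1) * ‖gradient φ₂ z - gradient φ₁ z‖) ''
      (ball (0 : EuclideanSpace ℝ (Fin N)) 1 \ {0})) with hS
  set M := sSup S with hM
  have hbdd : BddAbove S := by
    refine ⟨R + R, ?_⟩
    rintro y ⟨z, hz, rfl⟩
    have e1 : |φ₂ z - φ₁ z| ≤ |φ₂ z| + |φ₁ z| := by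
      simpa [Real.norm_eq_abs] using norm_sub_le (φ₂ z) (φ₁ z)
    have e2 : ‖gradient φ₂ z - gradient φ₁ z‖ ≤ ‖gradient φ₂ z‖ + ‖gradient φ₁ z‖ :=
      norm_sub_le _ _
    have w1 : (0:ℝ) ≤ ‖z‖ ^ σ := Real.rpow_nonneg (norm_nonneg z) _
    have w2 : (0:ℝ) ≤ ‖z‖ ^ (σ + 1) := Real.rpow_nonneg (norm_nonneg z) _
    have g1 := h1 z hz
    have g2 := h2 z hz
    show ‖z‖ ^ σ * |φ₂ z - φ₁ z| + ‖z‖ ^ (σ + 1) * ‖gradient φ₂ z - gradient φ₁ z‖ ≤ R + R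
    nlinarith [mul_le_mul_of_nonneg_left e1 w1, mul_le_mul_of_nonneg_left e2 w2]
  have hxmem : r ^ σ * |φ₂ x - φ₁ x| + r ^ (σ + 1) * ‖b - a‖ ∈ S := ⟨x, hx, rfl⟩
  have hMx := le_csSup hbdd hxmem
  have hM1 : r ^ (σ + 1) * ‖b - a‖ ≤ M := by
    have hnn : (0:ℝ) ≤ r ^ σ * |φ₂ x - φ₁ x| := by positivity
    linarith
  have hM0 : (0:ℝ) ≤ M := le_trans (by positivity) hMx
  have core := aux_core hp1' hp2 v a b
  -- exponent juggling
  have hpne : p - 1 ≠ 0 := by linarith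
  have hexp : (σ + 1) * (p - 1) + (σ + 1) = σ + 2 := by
    rw [hσ]; field_simp; ring
  have hsplit : r ^ (σ + 2) = (r ^ (σ + 1)) ^ (p - 1) * r ^ (σ + 1) := by
    rw [← hexp, Real.rpow_add hr0, Real.rpow_mul hr0.le]
  have hmax : r ^ (σ + 1) * max ‖a‖ ‖b‖ ≤ R := by
    rcases max_cases ‖a‖ ‖b‖ with ⟨h, _⟩ | ⟨h, _⟩ <;> rw [h]
    exacts [hra, hrb]
  have hmaxnn : (0:ℝ) ≤ max ‖a‖ ‖b‖ := le_trans (norm_nonneg a) (le_max_left _ _)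
  have hrs : (0:ℝ) ≤ r ^ (σ + 1) := Real.rpow_nonneg hr0.le _
  have hA : (r ^ (σ + 1)) ^ (p - 1) * (max ‖a‖ ‖b‖) ^ (p - 1) ≤ R ^ (p - 1) := by
    rw [← Real.mul_rpow hrs hmaxnn]
    exact Real.rpow_le_rpow (by positivity) hmax (by linarith)
  calc r ^ (σ + 2) *
        |‖v + b‖ ^ p - p * ‖v‖ ^ (p - 2) * (inner ℝ v b : ℝ)
          - ‖v + a‖ ^ p + p * ‖v‖ ^ (p - 2) * (inner ℝ v a : ℝ)|
      ≤ r ^ (σ + 2) * ((4 * p) * (max ‖a‖ ‖b‖) ^ (p - 1) * ‖b - a‖) :=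
        mul_le_mul_of_nonneg_left core (by positivity)
    _ = (4 * p) * ((r ^ (σ + 1)) ^ (p - 1) * (max ‖a‖ ‖b‖) ^ (p - 1))
          * (r ^ (σ + 1) * ‖b - a‖) := by rw [hsplit]; ring
    _ ≤ (4 * p) * R ^ (p - 1) * M := by
        have hAnn : (0:ℝ) ≤ (r ^ (σ + 1)) ^ (p - 1) * (max ‖a‖ ‖b‖) ^ (p - 1) := by positivity
        have hBnn : (0:ℝ) ≤ r ^ (σ + 1) * ‖b - a‖ := by positivity
        have h4p : (0:ℝ) ≤ 4 * p := by linarith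
        exact mul_le_mul (mul_le_mul_of_nonneg_left hA h4p) hM1 hBnn (by positivity)
end
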